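/- arXiv:2211.03669 — 9 statements merged into one kernel-verified Lean document; each statement's English description precedes it below -/
import Mathlib

section
/- Let A be a unital C*-algebra, let α₁, …, αₙ be automorphisms of A, each having the strong averaging property (SAveP), and let b₁, …, bₙ ∈ A. Then for every ε > 0 there exist m ≥ 1 and unitaries v₁, …, v_m ∈ A such that ‖(1/m) ∑_{i=1}^m v_i b_j α_j(v_i)*‖ < ε for every j = 1, …, n. -/
section Helpers

variable {A : Type*} [NormedRing A] [StarRing A] [CStarRing A] [NormedAlgebra ℂ A]
    [CompleteSpace A] [StarModule ℂ A]

set_option linter.unusedSectionVars false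

lemma my_norm_one_le : ‖(1 : A)‖ ≤ 1 := by
  have h : ‖star (1:A) * 1‖ = ‖(1:A)‖ * ‖(1:A)‖ := CStarRing.norm_star_mul_self
  rw [star_one, one_mul] at h
  nlinarith [norm_nonneg (1:A)]

lemma my_norm_unitary_le {v : A} (hv : v ∈ unitary A) : ‖v‖ ≤ 1 := by
  have h : ‖star v * v‖ = ‖v‖ * ‖v‖ := CStarRing.norm_star_mul_self
  rw [(Unitary.mem_iff.mp hv).1] at h
  nlinarith [norm_nonneg v, my_norm_one_le (A := A)]

lemma my_map_unitary (α : A ≃⋆ₐ[ℂ] A) {u : A} (hu : u ∈ unitary A) : α u ∈ unitary A := by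
  rw [Unitary.mem_iff] at hu ⊢
  exact ⟨by rw [← map_star, ← map_mul, hu.1, map_one],
    by rw [← map_star, ← map_mul, hu.2, map_one]⟩

lemma my_term_norm_le {v w : A} (hv : v ∈ unitary A) (hw : w ∈ unitary A) (x : A) :
    ‖v * x * star w‖ ≤ ‖x‖ := by
  have h1 : ‖v * x * star w‖ ≤ ‖v * x‖ * ‖star w‖ := norm_mul_le _ _
  have h2 : ‖v * x‖ ≤ ‖v‖ * ‖x‖ := norm_mul_le _ _
  have h3 : ‖star w‖ ≤ 1 := by rw [norm_star]; exact my_norm_unitary_le hw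
  have h4 := my_norm_unitary_le hv
  nlinarith [norm_nonneg v, norm_nonneg x, norm_nonneg (star w), norm_nonneg (v * x)]

lemma my_avg_norm_le {m' : ℕ} (hm' : 0 < m') (g : Fin m' → A) (C : ℝ)
    (hg : ∀ k, ‖g k‖ ≤ C) : ‖(1/(m':ℝ)) • ∑ k, g k‖ ≤ C := by
  have hm'R : (0:ℝ) < m' := by exact_mod_cast hm'
  calc ‖(1/(m':ℝ)) • ∑ k, g k‖ = (1/(m':ℝ)) * ‖∑ k, g k‖ := by
        rw [norm_smul, Real.norm_eq_abs, abs_of_pos (by positivity)]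
    _ ≤ (1/(m':ℝ)) * ∑ k, ‖g k‖ :=
        mul_le_mul_of_nonneg_left (norm_sum_le _ _) (by positivity)
    _ ≤ (1/(m':ℝ)) * ∑ _k : Fin m', C :=
        mul_le_mul_of_nonneg_left (Finset.sum_le_sum fun k _ => hg k) (by positivity)
    _ = C := by
        rw [Finset.sum_const, Finset.card_univ, Fintype.card_fin, nsmul_eq_mul]
        field_simp

lemma my_prod_avg (α : A ≃⋆ₐ[ℂ] A) (bb : A) {m' m : ℕ} (u : Fin m' → A) (v : Fin m → A) :
    (1 / ((m' * m : ℕ) : ℝ)) • ∑ i : Fin (m' * m),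
        (u (finProdFinEquiv.symm i).1 * v (finProdFinEquiv.symm i).2) * bb *
          star (α (u (finProdFinEquiv.symm i).1 * v (finProdFinEquiv.symm i).2))
    = (1 / (m' : ℝ)) • ∑ k : Fin m',
        u k * ((1 / (m : ℝ)) • ∑ i : Fin m, v i * bb * star (α (v i))) * star (α (u k)) := by
  have hc : (1 / ((m' * m : ℕ) : ℝ)) = (1/(m':ℝ)) * (1/(m:ℝ)) := by
    push_cast
    rw [one_div, one_div, one_div, mul_inv]
  rw [← Equiv.sum_comp (finProdFinEquiv : Fin m' × Fin m ≃ Fin (m' * m))]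
  simp only [Equiv.symm_apply_apply]
  rw [Fintype.sum_prod_type]
  simp only [Finset.smul_sum, Finset.mul_sum, Finset.sum_mul, mul_smul_comm, smul_mul_assoc,
    smul_smul, map_mul, star_mul, mul_assoc, hc]

end Helpers

/-- For an automorphism `α` of a unital C*-algebra `A` and `b ∈ A`, the norm-closed convex
hull of `{v * b * star (α v) : v unitary in A}`. -/
def avgSet {A : Type*} [NormedRing A] [StarRing A] [CStarRing A] [NormedAlgebra ℂ A]
    [CompleteSpace A] [StarModule ℂ A] (f : A → A) (b : A) : Set A :=
  closure (convexHull ℝ {x : A | ∃ v ∈ unitary A, x = v * b * star (f v)})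

/-- The strong averaging property (SAveP): `0 ∈ C_A^α(b)` for every `b ∈ A`. -/
def SAveP {A : Type*} [NormedRing A] [StarRing A] [CStarRing A] [NormedAlgebra ℂ A]
    [CompleteSpace A] [StarModule ℂ A] (α : A ≃⋆ₐ[ℂ] A) : Prop :=
  ∀ b : A, (0 : A) ∈ avgSet (⇑α) b

section EqualWeights

variable {A : Type*} [NormedRing A] [StarRing A] [CStarRing A] [NormedAlgebra ℂ A]
    [CompleteSpace A] [StarModule ℂ A]

/-- (SAveP) yields equal-weight averages of arbitrarily small norm. -/
lemma exists_equal_weights (α : A ≃⋆ₐ[ℂ] A) (hα : SAveP α) (b : A) (ε : ℝ) (hε : 0 < ε) :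
    ∃ m : ℕ, 0 < m ∧ ∃ v : Fin m → A, (∀ i, v i ∈ unitary A) ∧
      ‖(1 / (m : ℝ)) • ∑ i : Fin m, v i * b * star (α (v i))‖ < ε := by
  have h0 := hα b
  rw [avgSet, Metric.mem_closure_iff] at h0
  obtain ⟨x, hxmem, hxd⟩ := h0 (ε/2) (by positivity)
  rw [dist_zero_left] at hxd
  rw [mem_convexHull_iff_exists_fintype] at hxmem
  obtain ⟨ι, _inst, w, z, hw0, hw1, hz, hxe⟩ := hxmem
  classical
  choose u hu hzu using hz
  have hne : Nonempty ι := by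
    by_contra h
    rw [not_nonempty_iff] at h
    rw [Finset.univ_eq_empty, Finset.sum_empty] at hw1
    exact one_ne_zero hw1.symm
  set N : ℕ := Fintype.card ι with hN
  set B : ℝ := ‖b‖ + 1 with hB
  have hB0 : (0:ℝ) < B := by positivity
  have hzB : ∀ i, ‖z i‖ ≤ B := by
    intro i
    rw [hzu i]
    have := my_term_norm_le (hu i) (my_map_unitary α (hu i)) b
    simp only [hB]; linarith
  have hw1' : ∀ i, w i ≤ 1 := by
    intro i
    rw [← hw1]
    exact Finset.single_le_sum (fun j _ => hw0 j) (Finset.mem_univ i)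
  set K : ℝ := (N:ℝ) * ((N:ℝ)+1) * B with hK
  have hK0 : 0 ≤ K := by positivity
  obtain ⟨M, hM⟩ := exists_nat_gt ((N:ℝ) + K * (2/ε))
  set p : ι → ℕ := fun i => ⌊(M:ℝ) * w i⌋₊ with hp
  set m : ℕ := ∑ i, p i with hm
  have hple : ∀ i, (p i : ℝ) ≤ (M:ℝ) * w i :=
    fun i => Nat.floor_le (mul_nonneg (Nat.cast_nonneg M) (hw0 i))
  have hpgt : ∀ i, (M:ℝ) * w i - 1 < (p i : ℝ) := fun i => Nat.sub_one_lt_floor _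
  have hmcast : (m:ℝ) = ∑ i, (p i : ℝ) := by rw [hm]; push_cast; rfl
  have hmle : (m:ℝ) ≤ M := by
    rw [hmcast]
    calc ∑ i, (p i : ℝ) ≤ ∑ i, (M:ℝ) * w i := Finset.sum_le_sum (fun i _ => hple i)
      _ = M := by rw [← Finset.mul_sum, hw1, mul_one]
  have hmgt : (M:ℝ) - N < m := by
    have h1 : (M:ℝ) = ∑ i, (M:ℝ) * w i := by rw [← Finset.mul_sum, hw1, mul_one]
    have h2 : ∑ i, (M:ℝ) * w i < ∑ i, ((p i : ℝ) + 1) :=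
      Finset.sum_lt_sum_of_nonempty Finset.univ_nonempty (fun i _ => by linarith [hpgt i])
    have h3 : ∑ i, ((p i : ℝ) + 1) = (m:ℝ) + N := by
      rw [Finset.sum_add_distrib, ← hmcast, Finset.sum_const, Finset.card_univ, ← hN,
        nsmul_eq_mul, mul_one]
    linarith
  have hKm : K * (2/ε) < (m:ℝ) := by linarith
  have hm0R : (0:ℝ) < m := lt_of_le_of_lt (by positivity) hKm
  have hm0 : 0 < m := by exact_mod_cast hm0R
  have hc : (2/ε) * ε = 2 := div_mul_cancel₀ 2 (ne_of_gt hε)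
  have h6 : K * 2 < (m:ℝ) * ε := by
    have h7 := mul_lt_mul_of_pos_right hKm hε
    rw [mul_assoc, hc] at h7
    exact h7
  -- build the unitaries
  let e : (Σ i : ι, Fin (p i)) ≃ Fin m :=
    Fintype.equivFinOfCardEq (by simp [hm, Fintype.card_sigma])
  refine ⟨m, hm0, fun j => u (e.symm j).1, fun j => hu _, ?_⟩
  have hsum : ∑ j : Fin m, u (e.symm j).1 * b * star (α (u (e.symm j).1))
      = ∑ i, (p i) • z i := by
    rw [← Fintype.sum_equiv e (fun σ : Σ i : ι, Fin (p i) => z σ.1)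
      (fun j => u (e.symm j).1 * b * star (α (u (e.symm j).1)))
      (fun σ => by simp only [Equiv.symm_apply_apply]; exact hzu σ.1)]
    rw [← Finset.univ_sigma_univ, Finset.sum_sigma]
    simp [Finset.sum_const]
  rw [hsum]
  set y : A := (1 / (m : ℝ)) • ∑ i, (p i) • z i with hy
  have hy' : y = ∑ i, ((p i : ℝ)/m) • z i := by
    rw [hy, Finset.smul_sum]
    refine Finset.sum_congr rfl (fun i _ => ?_)
    rw [← Nat.cast_smul_eq_nsmul ℝ, smul_smul, one_div, div_eq_inv_mul]
  have hdiff : y - x = ∑ i, ((p i : ℝ)/m - w i) • z i := by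
    rw [hy', ← hxe, ← Finset.sum_sub_distrib]
    exact Finset.sum_congr rfl (fun i _ => (sub_smul _ _ _).symm)
  have habs : ∀ i, |(p i : ℝ)/m - w i| ≤ ((N:ℝ)+1)/m := by
    intro i
    have h1 : |(p i : ℝ) - m * w i| ≤ (N:ℝ) + 1 := by
      rw [abs_le]
      constructor
      · nlinarith [hple i, hpgt i, hw0 i, hw1' i, hmle, hmgt,
          mul_nonneg (sub_nonneg.mpr hmle) (hw0 i)]
      · nlinarith [hple i, hpgt i, hw0 i, hw1' i, hmle, hmgt,
          mul_le_mul_of_nonneg_left (hw1' i) (sub_nonneg.mpr hmle)]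
    have h2 : (p i : ℝ)/m - w i = ((p i : ℝ) - m * w i)/m := by field_simp
    rw [h2, abs_div, abs_of_pos hm0R]
    exact (div_le_div_iff_of_pos_right hm0R).mpr h1
  have hyx : ‖y - x‖ ≤ K / m := by
    rw [hdiff]
    calc ‖∑ i, ((p i : ℝ)/m - w i) • z i‖ ≤ ∑ i, ‖((p i : ℝ)/m - w i) • z i‖ :=
          norm_sum_le _ _
      _ ≤ ∑ _i : ι, (((N:ℝ)+1)/m) * B := by
          refine Finset.sum_le_sum (fun i _ => ?_)
          rw [norm_smul, Real.norm_eq_abs]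
          exact mul_le_mul (habs i) (hzB i) (norm_nonneg _) (by positivity)
      _ = (N:ℝ) * ((((N:ℝ)+1)/m) * B) := by
          rw [Finset.sum_const, Finset.card_univ, ← hN, nsmul_eq_mul]
      _ = K / m := by rw [hK]; field_simp
  have hKmlt : K / m < ε / 2 := by
    rw [div_lt_iff₀ hm0R]
    nlinarith
  calc ‖y‖ ≤ ‖y - x‖ + ‖x‖ := by
        have := norm_add_le (y - x) x; simpa using this
    _ < K/m + ε/2 := by linarith [hxd, hyx]
    _ < ε := by linarith

end EqualWeights

/-- Lemma 2.2: if automorphisms `α₁, …, αₙ` of a unital C*-algebra all have (SAveP) and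
`b₁, …, bₙ ∈ A`, then for every `ε > 0` there are unitaries `v₁, …, v_m` with
`‖(1/m) ∑ᵢ vᵢ bⱼ αⱼ(vᵢ)*‖ < ε` for every `j`. -/
theorem strong_averaging_simultaneous
    {A : Type*} [NormedRing A] [StarRing A] [CStarRing A] [NormedAlgebra ℂ A]
    [CompleteSpace A] [StarModule ℂ A]
    (n : ℕ) (α : Fin n → (A ≃⋆ₐ[ℂ] A)) (hα : ∀ j, SAveP (α j))
    (b : Fin n → A) (ε : ℝ) (hε : 0 < ε) :
    ∃ m : ℕ, 0 < m ∧ ∃ v : Fin m → A, (∀ i, v i ∈ unitary A) ∧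
      ∀ j : Fin n,
        ‖(1 / (m : ℝ)) • ∑ i : Fin m, v i * b j * star (α j (v i))‖ < ε := by
  induction n with
  | zero =>
    exact ⟨1, one_pos, fun _ => 1, fun _ => one_mem (unitary A), fun j => j.elim0⟩
  | succ n ih =>
    obtain ⟨m, hm, v, hv, hvlt⟩ := ih (fun j => α j.castSucc) (fun j => hα j.castSucc)
      (fun j => b j.castSucc)
    obtain ⟨m', hm', u, hu, hult⟩ := exists_equal_weights (α (Fin.last n)) (hα (Fin.last n))
      ((1 / (m : ℝ)) • ∑ i : Fin m, v i * b (Fin.last n) * star (α (Fin.last n) (v i))) ε hε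
    refine ⟨m' * m, Nat.mul_pos hm' hm,
      fun i => u (finProdFinEquiv.symm i).1 * v (finProdFinEquiv.symm i).2,
      fun i => mul_mem (hu _) (hv _), ?_⟩
    intro j
    rw [my_prod_avg (α j) (b j) u v]
    refine Fin.lastCases ?_ ?_ j
    · -- j = last
      refine lt_of_le_of_lt (le_of_eq ?_) hult
      congr 1
    · -- j = castSucc j'
      intro j'
      refine lt_of_le_of_lt (my_avg_norm_le hm' _
        ‖(1 / (m : ℝ)) • ∑ i : Fin m,
            v i * b j'.castSucc * star (α j'.castSucc (v i))‖ (fun k => ?_)) (hvlt j')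
      exact my_term_norm_le (hu k) (my_map_unitary _ (hu k)) _
end

section
/- Let α be an automorphism of a unital C*-algebra A and let u be a unitary element of A. Then the automorphism Ad_u ∘ α (given by a ↦ u α(a) u*) has the averaging property (AveP) if and only if 0 ∈ C_A^α(u). -/
/-- Lemma 2.3 (i): for an automorphism `α` of a unital C*-algebra `A` and a unitary `u ∈ A`,
the automorphism `Ad_u ∘ α` has the averaging property (AveP), i.e. `0 ∈ C_A^{Ad_u ∘ α}(1)`,
if and only if `0 ∈ C_A^α(u)`. -/
theorem adu_comp_aveP_iff
    {A : Type*} [NormedRing A] [StarRing A] [CStarRing A] [NormedAlgebra ℂ A]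
    [CompleteSpace A] [StarModule ℂ A]
    (α : A ≃⋆ₐ[ℂ] A) (u : A) (hu : u ∈ unitary A) :
    (0 : A) ∈ avgSet (fun a => u * α a * star u) 1 ↔ (0 : A) ∈ avgSet (⇑α) u := by
  obtain ⟨h1, h2⟩ := Unitary.mem_iff.mp hu
  -- the continuous linear equivalence x ↦ x * star u
  let e : A ≃L[ℝ] A :=
    { toFun := fun x => x * star u
      invFun := fun x => x * u
      map_add' := fun x y => add_mul x y (star u)
      map_smul' := fun c x => smul_mul_assoc c x (star u)
      left_inv := fun x => by simp [mul_assoc, h1]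
      right_inv := fun x => by simp [mul_assoc, h2]
      continuous_toFun := continuous_id.mul continuous_const
      continuous_invFun := continuous_id.mul continuous_const }
  have hset : (fun x => x * star u) ''
      {x : A | ∃ v ∈ unitary A, x = v * u * star (α v)} =
      {x : A | ∃ v ∈ unitary A, x = v * 1 * star (u * α v * star u)} := by
    ext x
    constructor
    · rintro ⟨y, ⟨v, hv, rfl⟩, rfl⟩
      exact ⟨v, hv, by simp [mul_assoc]⟩
    · rintro ⟨v, hv, rfl⟩
      exact ⟨v * u * star (α v), ⟨v, hv, rfl⟩, by simp [mul_assoc]⟩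
  have key : e '' avgSet (⇑α) u = avgSet (fun a => u * α a * star u) 1 := by
    unfold avgSet
    rw [e.image_closure]
    refine congrArg closure ?_
    rw [← hset]
    exact (LinearMap.mulRight ℝ (star u)).image_convexHull _
  constructor
  · intro h
    rw [← key] at h
    obtain ⟨y, hy, hy0⟩ := h
    have : y = 0 := by
      have := e.injective (a₁ := y) (a₂ := 0) (by simpa using hy0)
      exact this
    rwa [← this]
  · intro h
    rw [← key]
    exact ⟨0, h, by simp [e]⟩
end

section
/- Let α be an automorphism of a unital C*-algebra A whose invertible elements are norm-dense in A (i.e., A has stable rank one). If Ad_u ∘ α (given by a ↦ u α(a) u*) has the averaging property (AveP) for every unitary u ∈ A, then α has the strong averaging property (SAveP). -/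
set_option linter.unusedSectionVars false

lemma mean_two_unitaries {A : Type*} [CStarAlgebra A] {a : A} (ha : IsUnit a) (han : ‖a‖ ≤ 1) :
    ∃ u₁ ∈ unitary A, ∃ u₂ ∈ unitary A, a = (1/2 : ℝ) • (u₁ + u₂) := by
  by_cases htriv : Subsingleton A
  · exact ⟨1, one_mem _, 1, one_mem _, Subsingleton.elim _ _⟩
  have : Nontrivial A := not_subsingleton_iff_nontrivial.mp htriv
  have hsa : IsSelfAdjoint (star a * a) := IsSelfAdjoint.star_mul_self a
  set h := star a * a with hh
  have hspec0 : ∀ t ∈ spectrum ℝ h, 0 ≤ t := spectrum_star_mul_self_nonneg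
  have hnorm_h : ‖h‖ ≤ 1 := by
    calc ‖star a * a‖ ≤ ‖star a‖ * ‖a‖ := norm_mul_le _ _
      _ = ‖a‖ * ‖a‖ := by rw [norm_star]
      _ ≤ 1 := mul_le_one₀ han (norm_nonneg a) han
  have hspec1 : ∀ t ∈ spectrum ℝ h, t ≤ 1 := by
    intro t ht
    have h1 : (t : ℂ) ∈ spectrum ℂ h := (IsSelfAdjoint.coe_mem_spectrum_complex hsa).mpr ht
    have h2 := spectrum.norm_le_norm_of_mem h1
    have h3 : |t| ≤ 1 := by simpa using h2.trans hnorm_h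
    exact (abs_le.mp h3).2
  set b := cfc Real.sqrt h with hb
  have hbsa : IsSelfAdjoint b := cfc_predicate _ _
  have hb2 : b * b = h := by
    rw [hb, ← cfc_mul Real.sqrt Real.sqrt h]
    have e := cfc_congr (a := h) (f := fun t : ℝ => Real.sqrt t * Real.sqrt t)
      (g := fun t : ℝ => t) (fun t ht => Real.mul_self_sqrt (hspec0 t ht))
    rw [e, cfc_id' ℝ h]
  have hbspec : ∀ t ∈ spectrum ℝ b, 0 ≤ t ∧ t ≤ 1 := by
    intro t ht
    rw [hb, cfc_map_spectrum Real.sqrt h] at ht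
    obtain ⟨s, hs, rfl⟩ := ht
    exact ⟨Real.sqrt_nonneg s, Real.sqrt_le_one.mpr (hspec1 s hs)⟩
  have hhu : IsUnit h := ha.star.mul ha
  obtain ⟨H, hH⟩ := hhu
  have hcommbh : Commute b h := by rw [← hb2]; exact (Commute.refl b).mul_right (Commute.refl b)
  have hcommbH : Commute b (↑H⁻¹ : A) := by
    have : Commute b (↑H : A) := hH ▸ hcommbh
    exact this.units_inv_right
  set c := b * (↑H⁻¹ : A) with hc
  have hbc : b * c = 1 := by
    rw [hc, ← mul_assoc, hb2, ← hH]; exact H.mul_inv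
  have hcb : c * b = 1 := by
    rw [hc, mul_assoc, ← hcommbH.eq, ← mul_assoc, hb2, ← hH]; exact H.mul_inv
  have hstarcb : star c * b = 1 := by
    have := congrArg star hbc
    rwa [star_mul, star_one, hbsa.star_eq] at this
  have hstarc : star c = c := by
    calc star c = star c * (b * c) := by rw [hbc, mul_one]
      _ = (star c * b) * c := by rw [mul_assoc]
      _ = c := by rw [hstarcb, one_mul]
  set u := a * c with hu
  have hub : u * b = a := by rw [hu, mul_assoc, hcb, mul_one]
  have huu : star u * u = 1 := by
    rw [hu, star_mul, hstarc]
    calc c * star a * (a * c) = c * (star a * a) * c := by simp [mul_assoc]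
      _ = c * (b * b) * c := by rw [← hh, ← hb2]
      _ = (c * b) * (b * c) := by simp [mul_assoc]
      _ = 1 := by rw [hcb, hbc, one_mul]
  have hcu : IsUnit c := ⟨⟨c, b, hcb, hbc⟩, rfl⟩
  have hu_unit : IsUnit u := ha.mul hcu
  obtain ⟨U, hU⟩ := hu_unit
  have h1 : u * (↑U⁻¹ : A) = 1 := by rw [← hU]; exact U.mul_inv
  have h2 : star u = (↑U⁻¹ : A) := by
    calc star u = star u * (u * ↑U⁻¹) := by rw [h1, mul_one]
      _ = (star u * u) * ↑U⁻¹ := (mul_assoc _ _ _).symm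
      _ = ↑U⁻¹ := by rw [huu, one_mul]
  have huu' : u * star u = 1 := by rw [h2, h1]
  have hu_mem : u ∈ unitary A := Unitary.mem_iff.mpr ⟨huu, huu'⟩
  set s := cfc (fun t : ℝ => Real.sqrt (1 - t ^ 2)) b with hs
  have hssa : IsSelfAdjoint s := cfc_predicate _ _
  have hbs_comm : s * b = b * s := by
    have e1 : cfc (fun t : ℝ => t * Real.sqrt (1 - t ^ 2)) b
        = cfc (fun t : ℝ => t) b * cfc (fun t : ℝ => Real.sqrt (1 - t ^ 2)) b :=
      cfc_mul _ _ b
    have e2 : cfc (fun t : ℝ => Real.sqrt (1 - t ^ 2) * t) b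
        = cfc (fun t : ℝ => Real.sqrt (1 - t ^ 2)) b * cfc (fun t : ℝ => t) b :=
      cfc_mul _ _ b
    rw [cfc_id' ℝ b] at e1 e2
    rw [← hs] at e1 e2
    rw [← e1, ← e2]
    exact cfc_congr fun t _ => mul_comm _ t
  have hs2 : s * s = cfc (fun t : ℝ => 1 - t ^ 2) b := by
    rw [hs, ← cfc_mul _ _ b]
    exact cfc_congr fun t ht => Real.mul_self_sqrt (by nlinarith [(hbspec t ht).1, (hbspec t ht).2])
  have hb2' : b * b = cfc (fun t : ℝ => t ^ 2) b := by
    have e1 : cfc (fun t : ℝ => t * t) b = cfc (fun t : ℝ => t) b * cfc (fun t : ℝ => t) b :=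
      cfc_mul _ _ b
    rw [cfc_id' ℝ b] at e1
    rw [← e1]
    exact cfc_congr fun t _ => (sq t).symm
  have hsum : b * b + s * s = 1 := by
    rw [hb2', hs2, ← cfc_add b _ _]
    calc cfc (fun t : ℝ => t ^ 2 + (1 - t ^ 2)) b = cfc (fun _ : ℝ => (1:ℝ)) b :=
          cfc_congr fun t _ => by ring
      _ = 1 := cfc_const_one ℝ b
  have expand1 : (b - Complex.I • s) * (b + Complex.I • s) = 1 := by
    have e : (b - Complex.I • s) * (b + Complex.I • s)
        = b * b + Complex.I • (b * s) - Complex.I • (s * b) - (Complex.I * Complex.I) • (s * s) := by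
      simp only [mul_add, sub_mul, smul_mul_assoc, mul_smul_comm, smul_smul, smul_add, smul_sub]
      module
    rw [e, hbs_comm, Complex.I_mul_I, neg_one_smul]
    have e2 : b * b + Complex.I • (b * s) - Complex.I • (b * s) - -(s * s) = b * b + s * s := by
      abel
    rw [e2, hsum]
  have expand2 : (b + Complex.I • s) * (b - Complex.I • s) = 1 := by
    have e : (b + Complex.I • s) * (b - Complex.I • s)
        = b * b - Complex.I • (b * s) + Complex.I • (s * b) - (Complex.I * Complex.I) • (s * s) := by
      simp only [mul_add, mul_sub, add_mul, sub_mul, smul_mul_assoc, mul_smul_comm, smul_smul,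
        smul_add, smul_sub]
      module
    rw [e, hbs_comm, Complex.I_mul_I, neg_one_smul]
    have e2 : b * b - Complex.I • (b * s) + Complex.I • (b * s) - -(s * s) = b * b + s * s := by
      abel
    rw [e2, hsum]
  set w := b + Complex.I • s with hw
  have hws : star w = b - Complex.I • s := by
    rw [hw, star_add, star_smul, hssa.star_eq, hbsa.star_eq, Complex.star_def, Complex.conj_I,
      neg_smul, ← sub_eq_add_neg]
  have hw_mem : w ∈ unitary A := by
    refine Unitary.mem_iff.mpr ⟨?_, ?_⟩
    · rw [hws]; exact expand1
    · rw [hws]; exact expand2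
  refine ⟨u * w, mul_mem hu_mem hw_mem, u * star w, mul_mem hu_mem (Unitary.star_mem hw_mem), ?_⟩
  have hwsw : w + star w = b + b := by rw [hws, hw]; abel
  calc a = (1/2 : ℝ) • (a + a) := by
        rw [← two_smul ℝ a, smul_smul]; norm_num
    _ = (1/2 : ℝ) • (u * b + u * b) := by rw [hub]
    _ = (1/2 : ℝ) • (u * (b + b)) := by rw [mul_add]
    _ = (1/2 : ℝ) • (u * (w + star w)) := by rw [hwsw]
    _ = (1/2 : ℝ) • (u * w + u * star w) := by rw [mul_add]

section Helpers

variable {A : Type*} [NormedRing A] [StarRing A] [CStarRing A] [NormedAlgebra ℂ A]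
    [CompleteSpace A] [StarModule ℂ A]

/-- The set being averaged. -/
private def avset (α : A ≃⋆ₐ[ℂ] A) (b : A) : Set A :=
  {x : A | ∃ v ∈ unitary A, x = v * b * star (α v)}

private lemma unitary_map (α : A ≃⋆ₐ[ℂ] A) {v : A} (hv : v ∈ unitary A) :
    α v ∈ unitary A := by
  rw [Unitary.mem_iff] at hv ⊢
  constructor
  · rw [← map_star, ← map_mul, hv.1, map_one]
  · rw [← map_star, ← map_mul, hv.2, map_one]

private lemma norm_conj_le [Nontrivial A] (α : A ≃⋆ₐ[ℂ] A) {v : A} (hv : v ∈ unitary A)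
    (x : A) : ‖v * x * star (α v)‖ ≤ ‖x‖ := by
  calc ‖v * x * star (α v)‖ ≤ ‖v * x‖ * ‖star (α v)‖ := norm_mul_le _ _
    _ ≤ ‖v‖ * ‖x‖ * ‖star (α v)‖ :=
        mul_le_mul_of_nonneg_right (norm_mul_le _ _) (norm_nonneg _)
    _ = ‖x‖ := by
        rw [norm_star, CStarRing.norm_of_mem_unitary hv,
          CStarRing.norm_of_mem_unitary (unitary_map α hv), one_mul, mul_one]

private lemma combo_mem (α : A ≃⋆ₐ[ℂ] A) {ι : Type} {t : Finset ι} {wgt : ι → ℝ} {v : ι → A}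
    (hnn : ∀ i ∈ t, 0 ≤ wgt i) (hsum : ∑ i ∈ t, wgt i = 1)
    (hv : ∀ i ∈ t, v i ∈ unitary A) (x : A) :
    (∑ i ∈ t, wgt i • (v i * x * star (α (v i)))) ∈ convexHull ℝ (avset α x) := by
  exact (convex_convexHull ℝ _).sum_mem hnn hsum fun i hi =>
    subset_convexHull ℝ _ ⟨v i, hv i hi, rfl⟩

private lemma combo_norm_le [Nontrivial A] (α : A ≃⋆ₐ[ℂ] A) {ι : Type} {t : Finset ι}
    {wgt : ι → ℝ} {v : ι → A}
    (hnn : ∀ i ∈ t, 0 ≤ wgt i) (hsum : ∑ i ∈ t, wgt i = 1)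
    (hv : ∀ i ∈ t, v i ∈ unitary A) (x : A) :
    ‖∑ i ∈ t, wgt i • (v i * x * star (α (v i)))‖ ≤ ‖x‖ := by
  calc ‖∑ i ∈ t, wgt i • (v i * x * star (α (v i)))‖
      ≤ ∑ i ∈ t, ‖wgt i • (v i * x * star (α (v i)))‖ := norm_sum_le _ _
    _ ≤ ∑ i ∈ t, wgt i * ‖x‖ := by
        refine Finset.sum_le_sum fun i hi => ?_
        rw [norm_smul, Real.norm_eq_abs, abs_of_nonneg (hnn i hi)]
        exact mul_le_mul_of_nonneg_left (norm_conj_le α (hv i hi) x) (hnn i hi)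
    _ = ‖x‖ := by rw [← Finset.sum_mul, hsum, one_mul]

/-- Absorption: a convex average of a convex average is a convex average. -/
private lemma hull_trans (α : A ≃⋆ₐ[ℂ] A) {x y : A}
    (hy : y ∈ convexHull ℝ (avset α x)) :
    convexHull ℝ (avset α y) ⊆ convexHull ℝ (avset α x) := by
  apply convexHull_min ?_ (convex_convexHull ℝ _)
  rintro z ⟨w, hw, rfl⟩
  let L : A →ₗ[ℝ] A := (LinearMap.mulLeft ℝ w).comp (LinearMap.mulRight ℝ (star (α w)))
  have hLy : L y = w * y * star (α w) := by
    simp only [L, LinearMap.comp_apply, LinearMap.mulLeft_apply, LinearMap.mulRight_apply,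
      mul_assoc]
  have hmem : L y ∈ convexHull ℝ (L '' avset α x) := by
    rw [← L.image_convexHull]; exact ⟨y, hy, rfl⟩
  have hsub : L '' avset α x ⊆ avset α x := by
    rintro - ⟨-, ⟨v, hv, rfl⟩, rfl⟩
    refine ⟨w * v, mul_mem hw hv, ?_⟩
    simp only [L, LinearMap.comp_apply, LinearMap.mulLeft_apply, LinearMap.mulRight_apply,
      map_mul, star_mul, mul_assoc]
  rw [← hLy]
  exact convexHull_mono hsub hmem

/-- Step 0: killing a unitary. -/
private lemma kill_unitary (α : A ≃⋆ₐ[ℂ] A)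
    (h : ∀ u ∈ unitary A, (0 : A) ∈
      closure (convexHull ℝ {x : A | ∃ v ∈ unitary A, x = v * 1 * star (u * α v * star u)}))
    {u : A} (hu : u ∈ unitary A) :
    (0 : A) ∈ closure (convexHull ℝ (avset α u)) := by
  have h0 := h u hu
  set S₀ : Set A := {x : A | ∃ v ∈ unitary A, x = v * 1 * star (u * α v * star u)} with hS₀
  have hlin : IsLinearMap ℝ (fun x : A => x * u) :=
    ⟨fun a b => add_mul a b u, fun c a => smul_mul_assoc c a u⟩
  have h1 : (fun x : A => x * u) '' closure (convexHull ℝ S₀) ⊆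
      closure ((fun x : A => x * u) '' convexHull ℝ S₀) :=
    image_closure_subset_closure_image (continuous_mul_right u)
  have h2 : (fun x : A => x * u) '' convexHull ℝ S₀ = convexHull ℝ ((fun x : A => x * u) '' S₀) :=
    hlin.image_convexHull S₀
  have h3 : (fun x : A => x * u) '' S₀ ⊆ avset α u := by
    rintro - ⟨-, ⟨v, hv, rfl⟩, rfl⟩
    refine ⟨v, hv, ?_⟩
    have hstar : star (u * α v * star u) = u * star (α v) * star u := by
      simp only [star_mul, star_star, mul_assoc]
    rw [hstar]
    have : star u * u = 1 := hu.1
    simp only [one_mul, mul_one, mul_assoc, this]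
  have h4 : (0 : A) ∈ closure ((fun x : A => x * u) '' convexHull ℝ S₀) :=
    h1 ⟨0, h0, zero_mul u⟩
  rw [h2] at h4
  exact closure_mono (convexHull_mono h3) h4

private lemma exists_combo (α : A ≃⋆ₐ[ℂ] A) {u : A}
    (hu : (0 : A) ∈ closure (convexHull ℝ (avset α u))) {ε : ℝ} (hε : 0 < ε) :
    ∃ (ι : Type) (t : Finset ι) (wgt : ι → ℝ) (v : ι → A),
      (∀ i ∈ t, 0 ≤ wgt i) ∧ (∑ i ∈ t, wgt i = 1) ∧ (∀ i ∈ t, v i ∈ unitary A) ∧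
      ‖∑ i ∈ t, wgt i • (v i * u * star (α (v i)))‖ < ε := by
  obtain ⟨z, hz, hzd⟩ := Metric.mem_closure_iff.mp hu ε hε
  rw [dist_comm, dist_zero_right] at hzd
  rw [convexHull_eq] at hz
  obtain ⟨ι, t, wgt, pts, hnn, hsum, hpts, hcm⟩ := hz
  have hz_eq : ∑ i ∈ t, wgt i • pts i = z := by
    rw [← Finset.centerMass_eq_of_sum_1 _ _ hsum] at *
    exact hcm
  classical
  have hch : ∀ i : ι, ∃ v : A, i ∈ t → (v ∈ unitary A ∧ pts i = v * u * star (α v)) := by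
    intro i
    by_cases hi : i ∈ t
    · obtain ⟨v, hv, he⟩ := hpts i hi
      exact ⟨v, fun _ => ⟨hv, he⟩⟩
    · exact ⟨1, fun hc => absurd hc hi⟩
  choose v hv using hch
  refine ⟨ι, t, wgt, v, hnn, hsum, fun i hi => (hv i hi).1, ?_⟩
  have : ∑ i ∈ t, wgt i • (v i * u * star (α (v i))) = ∑ i ∈ t, wgt i • pts i :=
    Finset.sum_congr rfl fun i hi => by rw [(hv i hi).2]
  rw [this, hz_eq]
  exact hzd


private lemma step [Nontrivial A] (α : A ≃⋆ₐ[ℂ] A) (hsr1 : Dense {a : A | IsUnit a})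
    (hkill : ∀ u ∈ unitary A, (0 : A) ∈ closure (convexHull ℝ (avset α u)))
    (x : A) : ∃ y ∈ convexHull ℝ (avset α x), ‖y‖ ≤ 3 / 4 * ‖x‖ := by
  letI : CStarAlgebra A :=
    { ‹NormedRing A›, ‹StarRing A›, ‹CompleteSpace A›, ‹CStarRing A›,
      ‹NormedAlgebra ℂ A›, ‹StarModule ℂ A› with }
  rcases eq_or_ne x 0 with rfl | hx
  · exact ⟨0, subset_convexHull ℝ _ ⟨1, one_mem _, by simp⟩, by simp⟩
  have hc : 0 < ‖x‖ := norm_pos_iff.mpr hx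
  set c := ‖x‖ with hcdef
  obtain ⟨a, haunit, had⟩ := Metric.mem_closure_iff.mp (hsr1 x) (c/16) (by positivity)
  have hax : ‖x - a‖ < c/16 := by rwa [dist_eq_norm] at had
  obtain ⟨a', ha'unit, ha'norm, ha'x⟩ : ∃ a', IsUnit a' ∧ ‖a'‖ ≤ c ∧ ‖x - a'‖ < c/8 := by
    by_cases hle : ‖a‖ ≤ c
    · exact ⟨a, haunit, hle, hax.trans_le (by linarith)⟩
    · push_neg at hle
      have hapos : 0 < ‖a‖ := lt_trans hc hle
      set r : ℝ := c / ‖a‖ with hr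
      have hr0 : 0 < r := div_pos hc hapos
      refine ⟨((r : ℝ) : ℂ) • a, ?_, ?_, ?_⟩
      · rw [Algebra.smul_def]
        exact (IsUnit.map (algebraMap ℂ A) (Ne.isUnit (by exact_mod_cast hr0.ne'))).mul haunit
      · rw [norm_smul, Complex.norm_real, Real.norm_eq_abs, abs_of_nonneg hr0.le, hr,
          div_mul_cancel₀ _ hapos.ne']
      · have hr1 : r ≤ 1 := (div_le_one hapos).mpr hle.le
        have h1 : ‖a - ((r : ℝ) : ℂ) • a‖ = (1 - r) * ‖a‖ := by
          have h0 : a - ((r : ℝ) : ℂ) • a = (((1 - r : ℝ)) : ℂ) • a := by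
            push_cast
            rw [sub_smul, one_smul]
          rw [h0, norm_smul, Complex.norm_real, Real.norm_eq_abs,
            abs_of_nonneg (by linarith : (0:ℝ) ≤ 1 - r)]
        have h2 : (1 - r) * ‖a‖ = ‖a‖ - c := by
          rw [hr]; field_simp
        have h3 : ‖a‖ - c < c/16 := by
          have h4 : ‖a‖ - ‖x‖ ≤ ‖a - x‖ := norm_sub_norm_le a x
          rw [norm_sub_rev] at h4
          rw [hcdef] at *
          linarith
        calc ‖x - ((r : ℝ) : ℂ) • a‖ ≤ ‖x - a‖ + ‖a - ((r : ℝ) : ℂ) • a‖ := by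
              have h5 : x - ((r : ℝ) : ℂ) • a = (x - a) + (a - ((r : ℝ) : ℂ) • a) := by abel
              rw [h5]; exact norm_add_le _ _
          _ < c/16 + c/16 := by rw [h1, h2]; exact add_lt_add hax h3
          _ = c/8 := by ring
  set e := x - a' with he
  have hea : ‖e‖ ≤ c/8 := le_of_lt ha'x
  have haunit'' : IsUnit (((c⁻¹ : ℝ) : ℂ) • a') := by
    rw [Algebra.smul_def]
    refine (IsUnit.map (algebraMap ℂ A) (Ne.isUnit ?_)).mul ha'unit
    exact_mod_cast (inv_pos.mpr hc).ne'
  have hanorm'' : ‖((c⁻¹ : ℝ) : ℂ) • a'‖ ≤ 1 := by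
    rw [norm_smul, Complex.norm_real, Real.norm_eq_abs, abs_of_nonneg (inv_pos.mpr hc).le]
    calc c⁻¹ * ‖a'‖ ≤ c⁻¹ * c := by
          exact mul_le_mul_of_nonneg_left ha'norm (inv_pos.mpr hc).le
      _ = 1 := inv_mul_cancel₀ hc.ne'
  obtain ⟨u₁, hu₁, u₂, hu₂, hmean⟩ := mean_two_unitaries haunit'' hanorm''
  have hx_eq : x = (c : ℂ) • ((1/2 : ℝ) • (u₁ + u₂)) + e := by
    have h6 : (c : ℂ) • ((1/2 : ℝ) • (u₁ + u₂)) = a' := by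
      rw [← hmean, smul_smul]
      have : (c : ℂ) * ((c⁻¹ : ℝ) : ℂ) = 1 := by
        push_cast
        exact mul_inv_cancel₀ (by exact_mod_cast hc.ne')
      rw [this, one_smul]
    rw [h6, he]; abel
  obtain ⟨ι, t, wgt, v, hnn, hsum, hv, hsmall⟩ :=
    exists_combo α (hkill u₁ hu₁) (by norm_num : (0:ℝ) < 1/4)
  refine ⟨∑ i ∈ t, wgt i • (v i * x * star (α (v i))), combo_mem α hnn hsum hv x, ?_⟩
  set z₁ := ∑ i ∈ t, wgt i • (v i * u₁ * star (α (v i))) with hz₁def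
  set z₂ := ∑ i ∈ t, wgt i • (v i * u₂ * star (α (v i))) with hz₂def
  set E := ∑ i ∈ t, wgt i • (v i * e * star (α (v i))) with hEdef
  have hy_eq : ∑ i ∈ t, wgt i • (v i * x * star (α (v i)))
      = (c : ℂ) • ((1/2 : ℝ) • (z₁ + z₂)) + E := by
    rw [hz₁def, hz₂def, hEdef, ← Finset.sum_add_distrib, Finset.smul_sum, Finset.smul_sum,
      ← Finset.sum_add_distrib]
    refine Finset.sum_congr rfl fun i hi => ?_
    rw [hx_eq]
    simp only [mul_add, add_mul, mul_smul_comm, smul_mul_assoc, smul_add]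
    module
  rw [hy_eq]
  have hz₂n : ‖z₂‖ ≤ 1 := by
    have h7 := combo_norm_le α hnn hsum hv u₂
    rwa [CStarRing.norm_of_mem_unitary hu₂] at h7
  have hEn : ‖E‖ ≤ c/8 := (combo_norm_le α hnn hsum hv e).trans hea
  have h8 : ‖z₁ + z₂‖ ≤ 1/4 + 1 := (norm_add_le _ _).trans (by linarith [le_of_lt hsmall])
  calc ‖(c : ℂ) • ((1/2 : ℝ) • (z₁ + z₂)) + E‖
      ≤ ‖(c : ℂ) • ((1/2 : ℝ) • (z₁ + z₂))‖ + ‖E‖ := norm_add_le _ _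
    _ = c * (1/2 * ‖z₁ + z₂‖) + ‖E‖ := by
        rw [norm_smul, norm_smul, Complex.norm_real, Real.norm_eq_abs, abs_of_nonneg hc.le,
          Real.norm_eq_abs]
        norm_num
    _ ≤ c * (1/2 * (1/4 + 1)) + c/8 := by
        have := mul_le_mul_of_nonneg_left h8 (by norm_num : (0:ℝ) ≤ 1/2)
        have := mul_le_mul_of_nonneg_left this hc.le
        linarith
    _ ≤ 3/4 * c := by linarith



private lemma iterate [Nontrivial A] (α : A ≃⋆ₐ[ℂ] A) (hsr1 : Dense {a : A | IsUnit a})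
    (hkill : ∀ u ∈ unitary A, (0 : A) ∈ closure (convexHull ℝ (avset α u)))
    (b : A) : ∀ n : ℕ, ∃ y ∈ convexHull ℝ (avset α b), ‖y‖ ≤ (3/4 : ℝ)^n * ‖b‖ := by
  intro n
  induction n with
  | zero =>
    refine ⟨b, subset_convexHull ℝ _ ⟨1, one_mem _, by simp⟩, by simp⟩
  | succ n ih =>
    obtain ⟨y, hy, hyn⟩ := ih
    obtain ⟨z, hz, hzn⟩ := step α hsr1 hkill y
    refine ⟨z, hull_trans α hy hz, ?_⟩
    calc ‖z‖ ≤ 3/4 * ‖y‖ := hzn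
      _ ≤ 3/4 * ((3/4 : ℝ)^n * ‖b‖) := by
          exact mul_le_mul_of_nonneg_left hyn (by norm_num)
      _ = (3/4 : ℝ)^(n+1) * ‖b‖ := by ring

end Helpers

/-- Proposition 2.4, second half: if `A` is a unital C*-algebra of stable rank one (its
invertible elements are norm-dense) and `Ad_u ∘ α` has (AveP) for every unitary `u ∈ A`,
then `α` has (SAveP). -/
theorem adu_aveP_implies_saveP_of_stable_rank_one
    {A : Type*} [NormedRing A] [StarRing A] [CStarRing A] [NormedAlgebra ℂ A]
    [CompleteSpace A] [StarModule ℂ A]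
    (hsr1 : Dense {a : A | IsUnit a})
    (α : A ≃⋆ₐ[ℂ] A)
    (h : ∀ u ∈ unitary A, (0 : A) ∈ avgSet (fun a => u * α a * star u) 1) :
    SAveP α := by
  intro b
  by_cases htriv : Subsingleton A
  · have h0 : (0 : A) ∈ {x : A | ∃ v ∈ unitary A, x = v * b * star (⇑α v)} :=
      ⟨1, one_mem _, Subsingleton.elim _ _⟩
    exact subset_closure (subset_convexHull ℝ _ h0)
  have hnt : Nontrivial A := not_subsingleton_iff_nontrivial.mp htriv
  have hkill : ∀ u ∈ unitary A, (0 : A) ∈ closure (convexHull ℝ (avset α u)) :=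
    fun u hu => kill_unitary α (fun u' hu' => h u' hu') hu
  show (0 : A) ∈ closure (convexHull ℝ (avset α b))
  rw [Metric.mem_closure_iff]
  intro ε hε
  obtain ⟨n, hn⟩ := exists_pow_lt_of_lt_one
    (show (0:ℝ) < ε / (‖b‖ + 1) by positivity) (by norm_num : (3/4 : ℝ) < 1)
  obtain ⟨y, hy, hyn⟩ := iterate α hsr1 hkill b n
  refine ⟨y, hy, ?_⟩
  rw [dist_zero_left]
  have hb1 : ‖b‖ ≤ ‖b‖ + 1 := by linarith
  have hpn : (0:ℝ) ≤ (3/4 : ℝ)^n := by positivity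
  have h9 : (3/4 : ℝ)^n * ‖b‖ ≤ (3/4 : ℝ)^n * (‖b‖ + 1) :=
    mul_le_mul_of_nonneg_left hb1 hpn
  have h10 : (3/4 : ℝ)^n * (‖b‖ + 1) < ε := by
    rw [lt_div_iff₀ (by positivity : (0:ℝ) < ‖b‖ + 1)] at hn
    linarith
  calc ‖y‖ ≤ (3/4 : ℝ)^n * ‖b‖ := hyn
    _ ≤ (3/4 : ℝ)^n * (‖b‖ + 1) := h9
    _ < ε := h10
end

section
/- Let α be an automorphism of a unital C*-algebra A with the strong averaging property (SAveP). Then α is residually outer: for every nonzero unital C*-algebra Q, every surjective unital *-homomorphism π : A → Q, and every automorphism β of Q satisfying π ∘ α = β ∘ π, the automorphism β is outer, i.e., there is no unitary u ∈ Q with β(x) = u x u* for all x ∈ Q. -/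
universe u

/-- Proposition 2.9: an automorphism of a unital C*-algebra with (SAveP) is residually
outer: for every nonzero unital C*-algebra `Q`, surjective unital *-homomorphism
`π : A → Q`, and automorphism `β` of `Q` with `π ∘ α = β ∘ π`, the automorphism `β` is
outer. -/
theorem saveP_implies_residually_outer
    {A : Type u} [NormedRing A] [StarRing A] [CStarRing A] [NormedAlgebra ℂ A]
    [CompleteSpace A] [StarModule ℂ A]
    (α : A ≃⋆ₐ[ℂ] A) (hα : SAveP α) :
    ∀ (Q : Type u) [NormedRing Q] [StarRing Q] [CStarRing Q] [NormedAlgebra ℂ Q]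
      [CompleteSpace Q] [StarModule ℂ Q] [Nontrivial Q]
      (π : A →⋆ₐ[ℂ] Q), Function.Surjective π →
      ∀ β : Q ≃⋆ₐ[ℂ] Q, (∀ a : A, π (α a) = β (π a)) →
        ¬ ∃ w ∈ unitary Q, ∀ x : Q, β x = w * x * star w := by
  intro Q _ _ _ _ _ _ _ π hπ β hcomm
  rintro ⟨w, hw, hβ⟩
  letI : CStarAlgebra A := ⟨⟩
  letI : CStarAlgebra Q := ⟨⟩
  obtain ⟨b, hb⟩ := hπ (star w)
  have hπcont : Continuous π :=
    AddMonoidHomClass.continuous_of_bound π 1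
      (by simpa using fun a => NonUnitalStarAlgHom.norm_apply_le π a)
  set S : Set A := {x : A | ∃ v ∈ unitary A, x = v * b * star (α v)} with hS
  have key : ∀ x ∈ S, π x = star w := by
    rintro x ⟨v, hv, rfl⟩
    have hvv : π v * star (π v) = 1 := by
      rw [← map_star, ← map_mul, (Unitary.mem_iff.mp hv).2, map_one]
    have hαv : π (α v) = w * π v * star w := by rw [hcomm, hβ]
    have hw1 : star w * w = 1 := (Unitary.mem_iff.mp hw).1
    rw [map_mul, map_mul, map_star, hb, hαv,
      show star (w * π v * star w) = w * (star (π v) * star w) by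
        simp [star_mul, mul_assoc]]
    simp only [mul_assoc]
    rw [← mul_assoc (star w) w, hw1, one_mul, ← mul_assoc, hvv, one_mul]
  have hsub : avgSet (⇑α) b ⊆ (⇑π) ⁻¹' {star w} := by
    have hconv : Convex ℝ ((⇑π) ⁻¹' {star w}) := by
      have := (convex_singleton (star w)).linear_preimage
        (π.toLinearMap.restrictScalars ℝ)
      exact this
    have hclosed : IsClosed ((⇑π) ⁻¹' {star w}) := isClosed_singleton.preimage hπcont
    refine closure_minimal ?_ hclosed
    exact convexHull_min (fun x hx => key x hx) hconv
  have h0 : (0 : A) ∈ avgSet (⇑α) b := hα b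
  have : π 0 = star w := hsub h0
  rw [map_zero] at this
  have h1 : (1 : Q) = 0 := by
    rw [← (Unitary.mem_iff.mp hw).1, ← this, zero_mul]
  exact one_ne_zero h1
end

section
/- Let M be a von Neumann algebra on a complex Hilbert space H and let α be a *-algebra automorphism of M. Assume that for every unitary w ∈ M, every nonzero projection p ∈ M, and every ε > 0 there exists a nonzero projection q ∈ M with q ≤ p and ‖q w α(q)‖ < ε. Then for every b ∈ M, every ε > 0, and every nonzero projection p ∈ M there exists a nonzero projection q ∈ M with q ≤ p and ‖q b α(q)‖ < ε. -/
set_option maxHeartbeats 1000000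

section Aux

lemma isClosed_centralizer' {H : Type*} [NormedAddCommGroup H] [InnerProductSpace ℂ H]
    [CompleteSpace H] (S : Set (H →L[ℂ] H)) : IsClosed (Set.centralizer S) := by
  have : Set.centralizer S = ⋂ a ∈ S, {x | a * x = x * a} := by
    ext x; simp [Set.mem_centralizer_iff]
  rw [this]
  exact isClosed_biInter fun a _ => isClosed_eq (continuous_mul_left a) (continuous_mul_right a)

noncomputable instance VonNeumannAlgebra.instCompleteSpaceAux {H : Type*}
    [NormedAddCommGroup H] [InnerProductSpace ℂ H] [CompleteSpace H]
    (M : VonNeumannAlgebra H) : CompleteSpace ↥M.toStarSubalgebra := by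
  have h : IsClosed (M.toStarSubalgebra : Set (H →L[ℂ] H)) := by
    rw [M.coe_toStarSubalgebra, ← M.centralizer_centralizer]
    exact isClosed_centralizer' _
  exact h.completeSpace_coe

noncomputable instance VonNeumannAlgebra.instCStarAlgebraAux {H : Type*}
    [NormedAddCommGroup H] [InnerProductSpace ℂ H] [CompleteSpace H]
    (M : VonNeumannAlgebra H) : CStarAlgebra ↥M.toStarSubalgebra := {}

lemma exists_unitary_half {A : Type*} [CStarAlgebra A] [Nontrivial A] {a : A}
    (ha : IsSelfAdjoint a) (h1 : ‖a‖ ≤ 1) :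
    ∃ u ∈ unitary A, a = (1/2 : ℂ) • (u + star u) := by
  have hn : IsStarNormal a := ha.isStarNormal
  set f : ℂ → ℂ := fun z => z + Complex.I * (Real.sqrt (1 - z.re ^ 2) : ℝ) with hfdef
  have hf : Continuous f := by fun_prop
  have hspec : ∀ x ∈ spectrum ℂ a, x = (x.re : ℂ) ∧ x.re ^ 2 ≤ 1 := by
    intro x hx
    have hx' : x = (x.re : ℂ) := ha.mem_spectrum_eq_re hx
    have hb : ‖x‖ ≤ 1 := (spectrum.norm_le_norm_of_mem hx).trans h1
    refine ⟨hx', ?_⟩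
    have h2 : |x.re| ≤ 1 := by
      calc |x.re| ≤ ‖x‖ := Complex.abs_re_le_norm x
      _ ≤ 1 := hb
    nlinarith [abs_nonneg x.re, sq_abs x.re]
  have hu : cfc f a ∈ unitary A := by
    rw [cfc_unitary_iff f a (hf := hf.continuousOn)]
    intro x hx
    obtain ⟨hx1, hx2⟩ := hspec x hx
    have hs : Real.sqrt (1 - x.re ^ 2) ^ 2 = 1 - x.re ^ 2 := Real.sq_sqrt (by linarith)
    have hfx : f x = (x.re : ℂ) + (Real.sqrt (1 - x.re ^ 2) : ℝ) * Complex.I := by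
      rw [hfdef]; simp only []; rw [← hx1]; ring
    have hconj : (starRingEnd ℂ) (f x)
        = (x.re : ℂ) - (Real.sqrt (1 - x.re ^ 2) : ℝ) * Complex.I := by
      rw [hfx]; simp [Complex.conj_ofReal]; ring
    rw [RCLike.star_def, hconj, hfx]
    have key : ((x.re:ℂ) - (Real.sqrt (1 - x.re ^ 2) : ℝ) * Complex.I) *
        ((x.re:ℂ) + (Real.sqrt (1 - x.re ^ 2) : ℝ) * Complex.I)
        = ((x.re ^ 2 + Real.sqrt (1 - x.re ^ 2) ^ 2 : ℝ) : ℂ) := by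
      push_cast
      ring_nf
      rw [Complex.I_sq]
      ring
    rw [key, hs]
    norm_num
  refine ⟨cfc f a, hu, ?_⟩
  have h2 : cfc f a + star (cfc f a) = (2 : ℂ) • a := by
    rw [← cfc_star f a, ← cfc_add a f _ (by fun_prop) (by fun_prop)]
    have hcongr : cfc (fun z => f z + star (f z)) a = cfc ((2 : ℂ) * ·) a := by
      apply cfc_congr
      intro x hx
      obtain ⟨hx1, _⟩ := hspec x hx
      simp only [hfdef, RCLike.star_def, map_add, map_mul, Complex.conj_I, Complex.conj_ofReal]
      rw [hx1, Complex.conj_ofReal]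
      ring
    rw [hcongr, cfc_const_mul_id (2 : ℂ) a hn]
  rw [h2, smul_smul]
  norm_num

lemma proj_norm_le_one {A : Type*} [NormedRing A] [StarRing A] [CStarRing A] {q : A}
    (hq : IsSelfAdjoint q) (hqq : q * q = q) : ‖q‖ ≤ 1 := by
  have h := CStarRing.norm_star_mul_self (x := q)
  rw [hq.star_eq, hqq] at h
  nlinarith [norm_nonneg q]

lemma corner_le {A : Type*} [NormedRing A] {q r q' r' w : A}
    (hqr : q * r = q) (hq'r' : r' * q' = q') (hq : ‖q‖ ≤ 1) (hq' : ‖q'‖ ≤ 1) :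
    ‖q * w * q'‖ ≤ ‖r * w * r'‖ := by
  have h : q * (r * w * r') * q' = q * w * q' := by
    rw [← mul_assoc q (r * w) r', ← mul_assoc q r w, hqr, mul_assoc (q * w) r' q', hq'r']
  have hqq' : ‖q‖ * ‖q'‖ ≤ 1 := by nlinarith [norm_nonneg q, norm_nonneg q']
  calc ‖q * w * q'‖ = ‖q * (r * w * r') * q'‖ := by rw [h]
    _ ≤ ‖q * (r * w * r')‖ * ‖q'‖ := norm_mul_le _ _
    _ ≤ (‖q‖ * ‖r * w * r'‖) * ‖q'‖ := by
        have := norm_mul_le q (r * w * r')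
        have h2 := norm_nonneg q'
        nlinarith
    _ ≤ ‖r * w * r'‖ := by nlinarith [norm_nonneg (r * w * r')]

lemma proj_chain {A : Type*} [Semigroup A] {a b c : A} (h1 : a * b = a) (h2 : b * c = b) :
    a * c = a := by
  calc a * c = (a * b) * c := by rw [h1]
    _ = a * (b * c) := mul_assoc _ _ _
    _ = a * b := by rw [h2]
    _ = a := h1

end Aux

/-- Lemma 2.11 (i): let `M` be a von Neumann algebra on a complex Hilbert space `H` and `α`
a *-automorphism of `M` such that for every unitary `w ∈ M`, nonzero projection `p ∈ M`
and `ε > 0` there is a nonzero projection `q ≤ p` with `‖q w α(q)‖ < ε` (Connes'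
characterization of proper outerness of all `Ad_w ∘ α`).  Then for every `b ∈ M`, `ε > 0`
and nonzero projection `p ∈ M` there is a nonzero projection `q ≤ p` with `‖q b α(q)‖ < ε`. -/
theorem properly_outer_small_corner
    {H : Type*} [NormedAddCommGroup H] [InnerProductSpace ℂ H] [CompleteSpace H]
    (M : VonNeumannAlgebra H) (α : ↥M.toStarSubalgebra ≃⋆ₐ[ℂ] ↥M.toStarSubalgebra)
    (hconnes : ∀ w : ↥M.toStarSubalgebra, w ∈ unitary ↥M.toStarSubalgebra →
      ∀ p : ↥M.toStarSubalgebra, IsSelfAdjoint p → p * p = p → p ≠ 0 →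
      ∀ ε : ℝ, 0 < ε →
        ∃ q : ↥M.toStarSubalgebra, IsSelfAdjoint q ∧ q * q = q ∧ q ≠ 0 ∧ q * p = q ∧
          ‖((q * w * α q : ↥M.toStarSubalgebra) : H →L[ℂ] H)‖ < ε) :
    ∀ b : ↥M.toStarSubalgebra, ∀ ε : ℝ, 0 < ε →
      ∀ p : ↥M.toStarSubalgebra, IsSelfAdjoint p → p * p = p → p ≠ 0 →
        ∃ q : ↥M.toStarSubalgebra, IsSelfAdjoint q ∧ q * q = q ∧ q ≠ 0 ∧ q * p = q ∧
          ‖((q * b * α q : ↥M.toStarSubalgebra) : H →L[ℂ] H)‖ < ε := by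
  intro b ε hε p hp hpp hp0
  by_cases hns : Subsingleton ↥M.toStarSubalgebra
  · exact absurd (Subsingleton.elim p 0) hp0
  haveI : Nontrivial ↥M.toStarSubalgebra := not_subsingleton_iff_nontrivial.mp hns
  set c : ℝ := ‖b‖ + 1 with hcdef
  have hc : 0 < c := by positivity
  have hbc : ‖b‖ ≤ c := by simp [hcdef]
  set d : ℝ := 1 / (2 * c) with hddef
  have hd : 0 < d := by positivity
  set s₁ : ↥M.toStarSubalgebra := ((d : ℂ)) • (b + star b) with hs₁def
  set s₂ : ↥M.toStarSubalgebra := ((d : ℂ) * Complex.I) • (star b - b) with hs₂def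
  have hsa₁ : IsSelfAdjoint s₁ := by
    rw [hs₁def, IsSelfAdjoint, star_smul, star_add, star_star]
    simp [Complex.conj_ofReal, add_comm]
  have hsa₂ : IsSelfAdjoint s₂ := by
    rw [hs₂def, IsSelfAdjoint, star_smul, star_sub, star_star]
    simp only [star_mul', Complex.star_def, Complex.conj_I, Complex.conj_ofReal]
    module
  have hn₁ : ‖s₁‖ ≤ 1 := by
    rw [hs₁def, norm_smul]
    have h1 : ‖((d : ℂ))‖ = d := by
      rw [Complex.norm_real, Real.norm_eq_abs, abs_of_pos hd]
    have h2 : ‖b + star b‖ ≤ 2 * ‖b‖ := by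
      calc ‖b + star b‖ ≤ ‖b‖ + ‖star b‖ := norm_add_le _ _
        _ = 2 * ‖b‖ := by rw [norm_star]; ring
    calc ‖((d:ℂ))‖ * ‖b + star b‖ ≤ d * (2 * ‖b‖) := by rw [h1]; gcongr
      _ = ‖b‖ / c := by rw [hddef]; field_simp
      _ ≤ 1 := by rw [div_le_one hc]; exact hbc
  have hn₂ : ‖s₂‖ ≤ 1 := by
    rw [hs₂def, norm_smul]
    have h1 : ‖((d : ℂ) * Complex.I)‖ = d := by
      rw [norm_mul, Complex.norm_I, Complex.norm_real, Real.norm_eq_abs, abs_of_pos hd]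
      ring
    have h2 : ‖star b - b‖ ≤ 2 * ‖b‖ := by
      calc ‖star b - b‖ ≤ ‖star b‖ + ‖b‖ := norm_sub_le _ _
        _ = 2 * ‖b‖ := by rw [norm_star]; ring
    calc ‖((d:ℂ) * Complex.I)‖ * ‖star b - b‖ ≤ d * (2 * ‖b‖) := by rw [h1]; gcongr
      _ = ‖b‖ / c := by rw [hddef]; field_simp
      _ ≤ 1 := by rw [div_le_one hc]; exact hbc
  have hcne : (c : ℂ) ≠ 0 := by exact_mod_cast hc.ne'
  have hcd : (c : ℂ) * (d : ℂ) = 1 / 2 := by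
    rw [hddef]
    push_cast
    field_simp
  have hb : b = ((c : ℝ) : ℂ) • s₁ + (((c : ℝ) : ℂ) * Complex.I) • s₂ := by
    rw [hs₁def, hs₂def, smul_smul, smul_smul]
    rw [show ((c:ℝ):ℂ) * Complex.I * ((d:ℂ) * Complex.I)
        = ((c:ℂ) * (d:ℂ)) * (Complex.I * Complex.I) by ring]
    rw [hcd, Complex.I_mul_I]
    module
  obtain ⟨u₁, hu₁, he₁⟩ := exists_unitary_half hsa₁ hn₁
  obtain ⟨u₂, hu₂, he₂⟩ := exists_unitary_half hsa₂ hn₂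
  have hε' : 0 < ε / (2 * c) := by positivity
  obtain ⟨q₁, h₁sa, h₁pr, h₁0, h₁le, h₁n⟩ := hconnes u₁ hu₁ p hp hpp hp0 _ hε'
  obtain ⟨q₂, h₂sa, h₂pr, h₂0, h₂le, h₂n⟩ :=
    hconnes (star u₁) (Unitary.star_mem hu₁) q₁ h₁sa h₁pr h₁0 _ hε'
  obtain ⟨q₃, h₃sa, h₃pr, h₃0, h₃le, h₃n⟩ := hconnes u₂ hu₂ q₂ h₂sa h₂pr h₂0 _ hε'
  obtain ⟨q₄, h₄sa, h₄pr, h₄0, h₄le, h₄n⟩ :=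
    hconnes (star u₂) (Unitary.star_mem hu₂) q₃ h₃sa h₃pr h₃0 _ hε'
  have hq43 : q₄ * q₃ = q₄ := h₄le
  have hq42 : q₄ * q₂ = q₄ := proj_chain hq43 h₃le
  have hq41 : q₄ * q₁ = q₄ := proj_chain hq42 h₂le
  have hq4p : q₄ * p = q₄ := proj_chain hq41 h₁le
  have rev : ∀ x y : ↥M.toStarSubalgebra, IsSelfAdjoint x → IsSelfAdjoint y →
      x * y = x → y * x = x := by
    intro x y hx hy hxy
    calc y * x = star y * star x := by rw [hx.star_eq, hy.star_eq]
      _ = star (x * y) := (star_mul x y).symm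
      _ = star x := by rw [hxy]
      _ = x := hx.star_eq
  have hαsa : ∀ x : ↥M.toStarSubalgebra, IsSelfAdjoint x → IsSelfAdjoint (α x) := by
    intro x hx
    rw [IsSelfAdjoint, ← map_star, hx.star_eq]
  have hq4n : ‖q₄‖ ≤ 1 := proj_norm_le_one h₄sa h₄pr
  have hαq4pr : α q₄ * α q₄ = α q₄ := by rw [← map_mul, h₄pr]
  have hαq4n : ‖α q₄‖ ≤ 1 := proj_norm_le_one (hαsa _ h₄sa) hαq4pr
  have hbound : ∀ (r w : ↥M.toStarSubalgebra), IsSelfAdjoint r → r * r = r → q₄ * r = q₄ →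
      ‖q₄ * w * α q₄‖ ≤ ‖r * w * α r‖ := by
    intro r w hrsa hrpr hqr
    have hrq : r * q₄ = q₄ := rev _ _ h₄sa hrsa hqr
    have h' : α r * α q₄ = α q₄ := by rw [← map_mul, hrq]
    exact corner_le hqr h' hq4n hαq4n
  have t₁ : ‖q₄ * u₁ * α q₄‖ < ε / (2 * c) :=
    lt_of_le_of_lt (hbound q₁ u₁ h₁sa h₁pr hq41) h₁n
  have t₂ : ‖q₄ * star u₁ * α q₄‖ < ε / (2 * c) :=
    lt_of_le_of_lt (hbound q₂ (star u₁) h₂sa h₂pr hq42) h₂n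
  have t₃ : ‖q₄ * u₂ * α q₄‖ < ε / (2 * c) :=
    lt_of_le_of_lt (hbound q₃ u₂ h₃sa h₃pr hq43) h₃n
  have t₄ : ‖q₄ * star u₂ * α q₄‖ < ε / (2 * c) := h₄n
  refine ⟨q₄, h₄sa, h₄pr, h₄0, hq4p, ?_⟩
  show ‖q₄ * b * α q₄‖ < ε
  have hexp : q₄ * b * α q₄
      = (((c : ℝ) : ℂ) * (1/2)) • (q₄ * u₁ * α q₄ + q₄ * star u₁ * α q₄)
      + (((c : ℝ) : ℂ) * Complex.I * (1/2)) • (q₄ * u₂ * α q₄ + q₄ * star u₂ * α q₄) := by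
    rw [hb, he₁, he₂]
    simp only [smul_add, mul_add, add_mul, smul_mul_assoc, mul_smul_comm, smul_smul]
    try module
  rw [hexp]
  have hnc1 : ‖(((c : ℝ) : ℂ) * (1/2))‖ = c / 2 := by
    rw [norm_mul, Complex.norm_real, Real.norm_eq_abs, abs_of_pos hc]
    norm_num
    ring
  have hnc2 : ‖(((c : ℝ) : ℂ) * Complex.I * (1/2))‖ = c / 2 := by
    rw [norm_mul, norm_mul, Complex.norm_I, Complex.norm_real, Real.norm_eq_abs, abs_of_pos hc]
    norm_num
    ring
  have hfinal : (c/2) * (ε / (2*c) + ε / (2*c)) + (c/2) * (ε / (2*c) + ε / (2*c)) = ε := by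
    field_simp
    ring
  calc ‖(((c : ℝ) : ℂ) * (1/2)) • (q₄ * u₁ * α q₄ + q₄ * star u₁ * α q₄)
      + (((c : ℝ) : ℂ) * Complex.I * (1/2)) • (q₄ * u₂ * α q₄ + q₄ * star u₂ * α q₄)‖
      ≤ (c/2) * (‖q₄ * u₁ * α q₄‖ + ‖q₄ * star u₁ * α q₄‖)
        + (c/2) * (‖q₄ * u₂ * α q₄‖ + ‖q₄ * star u₂ * α q₄‖) := by
        refine (norm_add_le _ _).trans ?_
        rw [norm_smul, norm_smul, hnc1, hnc2]
        gcongr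
        · exact norm_add_le _ _
        · exact norm_add_le _ _
    _ < (c/2) * (ε / (2*c) + ε / (2*c)) + (c/2) * (ε / (2*c) + ε / (2*c)) := by
        exact add_lt_add ((mul_lt_mul_iff_right₀ (by positivity)).mpr (add_lt_add t₁ t₂))
          ((mul_lt_mul_iff_right₀ (by positivity)).mpr (add_lt_add t₃ t₄))
    _ = ε := hfinal
end

section
/- Let A be a unital C*-algebra, let a ∈ A, let ε > 0, and let p ∈ A be a projection (p = p* = p²) satisfying: (a) ‖p a p‖ ≤ ε; (b) p is properly infinite, i.e., there exist s₁, s₂ ∈ A with s₁* s₁ = s₂* s₂ = p, s₁ s₁* ≤ p, s₂ s₂* ≤ p, and (s₁ s₁*)(s₂ s₂*) = 0; and (c) 1 − p is subequivalent to p, i.e., there exists t ∈ A with t* t = 1 − p and t t* ≤ p. Then inf{‖x‖ : x ∈ C_A(a)} ≤ ε; that is, for every δ > 0 there exists x in the norm-closed convex hull of {v a v* : v a unitary element of A} with ‖x‖ ≤ ε + δ. -/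
/-- For `a` in a unital C*-algebra `A`, the norm-closed convex hull of
`{v * a * star v : v unitary in A}` (this is `C_A(a)`). -/
def dixmierSet {A : Type*} [NormedRing A] [StarRing A] [CStarRing A] [NormedAlgebra ℂ A]
    [CompleteSpace A] [StarModule ℂ A] (a : A) : Set A :=
  closure (convexHull ℝ {x : A | ∃ v ∈ unitary A, x = v * a * star v})

set_option maxHeartbeats 2000000 in
/-- Lemma 2.15: let `A` be a unital C*-algebra, `a ∈ A`, `ε > 0`, and let `p ∈ A` be a
properly infinite projection with `‖p a p‖ ≤ ε` and `1 - p ≼ p`.  Then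
`inf {‖x‖ : x ∈ C_A(a)} ≤ ε`. -/
theorem dixmier_norm_le_of_properly_infinite
    {A : Type*} [NormedRing A] [StarRing A] [CStarRing A] [NormedAlgebra ℂ A]
    [CompleteSpace A] [StarModule ℂ A]
    (a : A) (ε : ℝ) (hε : 0 < ε)
    (p : A) (hp_sa : IsSelfAdjoint p) (hp_idem : p * p = p)
    (hpap : ‖p * a * p‖ ≤ ε)
    (hp_propinf : ∃ s₁ s₂ : A,
      star s₁ * s₁ = p ∧ star s₂ * s₂ = p ∧
      (s₁ * star s₁) * p = s₁ * star s₁ ∧ (s₂ * star s₂) * p = s₂ * star s₂ ∧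
      (s₁ * star s₁) * (s₂ * star s₂) = 0)
    (hsub : ∃ t : A, star t * t = 1 - p ∧ (t * star t) * p = t * star t) :
    ∀ δ : ℝ, 0 < δ → ∃ x ∈ dixmierSet a, ‖x‖ ≤ ε + δ := by
  classical
  intro δ hδ
  set S : Set A := {x : A | ∃ v ∈ unitary A, x = v * a * star v} with hSdef
  rcases subsingleton_or_nontrivial A with hS | hN
  · refine ⟨a, subset_closure (subset_convexHull ℝ _ ⟨1, one_mem (unitary A), by simp⟩), ?_⟩
    have ha0 : a = 0 := Subsingleton.elim a 0
    rw [ha0, norm_zero]; linarith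
  obtain ⟨s₁, s₂, hs1, hs2, hs1p, hs2p, horth⟩ := hp_propinf
  obtain ⟨t, htt, htp⟩ := hsub
  letI : CStarAlgebra A := {}
  letI : PartialOrder A := CStarAlgebra.spectralOrder A
  letI : StarOrderedRing A := CStarAlgebra.spectralOrderedRing A
  have sp : star p = p := hp_sa.star_eq
  have hq_idem : (1 - p) * (1 - p) = 1 - p := by
    have h : (1 - p) * (1 - p) = 1 - p - p + p * p := by noncomm_ring
    rw [h, hp_idem]; abel
  -- key: if star s * s is a projection e then s * e = s
  have key : ∀ s e : A, star s * s = e → e * e = e → star e = e → s * e = s := by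
    intro s e h he hse
    have h0 : star (s * e - s) * (s * e - s) = 0 := by
      have hsw : star (s * e - s) = e * star s - star s := by
        rw [star_sub, star_mul, hse]
      have hh : (e * star s - star s) * (s * e - s)
          = star e * (star s * s) * e - star e * (star s * s) - star s * s * e + star s * s := by
        rw [hse]; noncomm_ring
      rw [hsw, hh, h, hse, he, he]; abel
    have h1 : ‖s * e - s‖ * ‖s * e - s‖ = 0 := by
      rw [← CStarRing.norm_star_mul_self, h0, norm_zero]
    have h2 : s * e - s = 0 := by
      rw [← norm_eq_zero]; exact mul_self_eq_zero.mp h1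
    exact sub_eq_zero.mp h2
  -- basic facts about t
  have ts : t * (1 - p) = t := key t (1 - p) htt hq_idem (by simp [sp])
  have tp0 : t * p = 0 := by
    have h : t - t * p = t := by
      calc t - t * p = t * (1 - p) := by noncomm_ring
        _ = t := ts
    exact sub_eq_self.mp h
  have tst_t : t * star t * t = t := by
    rw [mul_assoc, htt, ts]
  have pt : p * t = t := by
    have h1 : p * (t * star t) = t * star t := by
      have h2 := congrArg star htp
      simpa [star_mul, star_star, sp, mul_assoc] using h2
    calc p * t = p * (t * star t * t) := by rw [tst_t]
      _ = p * (t * star t) * t := by rw [← mul_assoc]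
      _ = t * star t * t := by rw [h1]
      _ = t := tst_t
  -- basic facts about s₁, s₂
  have keyS : ∀ s : A, star s * s = p → s * star s * p = s * star s →
      s * p = s ∧ p * s = s := by
    intro s hss hsp
    have hs_e : s * p = s := key s p hss hp_idem sp
    have h1 : p * (s * star s) = s * star s := by
      have h2 := congrArg star hsp
      simpa [star_mul, star_star, sp, mul_assoc] using h2
    have h2 : s * star s * s = s := by rw [mul_assoc, hss, hs_e]
    refine ⟨hs_e, ?_⟩
    calc p * s = p * (s * star s * s) := by rw [h2]
      _ = p * (s * star s) * s := by rw [← mul_assoc]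
      _ = s * star s * s := by rw [h1]
      _ = s := h2
  obtain ⟨s1p, ps1⟩ := keyS s₁ hs1 hs1p
  obtain ⟨s2p, ps2⟩ := keyS s₂ hs2 hs2p
  have hss12 : star s₁ * s₂ = 0 := by
    have h3 : s₁ * star s₁ * s₁ = s₁ := by rw [mul_assoc, hs1, s1p]
    have h4 : s₂ * star s₂ * s₂ = s₂ := by rw [mul_assoc, hs2, s2p]
    have h5 : star s₁ * s₂
        = star s₁ * (s₁ * star s₁ * (s₂ * star s₂)) * s₂ := by
      calc star s₁ * s₂ = star (s₁ * star s₁ * s₁) * (s₂ * star s₂ * s₂) := by rw [h3, h4]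
        _ = (star s₁ * (s₁ * star s₁)) * (s₂ * star s₂ * s₂) := by
            simp [star_mul, star_star, mul_assoc]
        _ = star s₁ * (s₁ * star s₁ * (s₂ * star s₂)) * s₂ := by noncomm_ring
    rw [h5, horth, mul_zero, zero_mul]
  -- the sequence of isometries T with orthogonal ranges below p
  obtain ⟨T, hTiso, hTp0, hpT, hTorth⟩ :
      ∃ T : ℕ → A, (∀ i, star (T i) * T i = 1 - p) ∧ (∀ i, T i * p = 0) ∧
        (∀ i, p * T i = T i) ∧ (∀ i j, i ≠ j → star (T i) * T j = 0) := by
    set g : ℕ → A := fun i => s₂ ^ i * s₁ with hgdef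
    have hg0 : g 0 = s₁ := by simp [hgdef]
    have hgsucc : ∀ i, g (i + 1) = s₂ * g i := by
      intro i; simp [hgdef, pow_succ']; rw [mul_assoc]
    have hpg : ∀ i, p * g i = g i := by
      intro i; induction i with
      | zero => rw [hg0]; exact ps1
      | succ n ih => rw [hgsucc, ← mul_assoc, ps2]
    have hgg : ∀ i, star (g i) * g i = p := by
      intro i; induction i with
      | zero => rw [hg0]; exact hs1
      | succ n ih =>
          rw [hgsucc, star_mul, mul_assoc, ← mul_assoc (star s₂), hs2, hpg, ih]
    have hgorth0 : ∀ i k, star (g i) * g (i + k + 1) = 0 := by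
      intro i
      induction i with
      | zero =>
          intro k
          rw [hg0, show 0 + k + 1 = k + 1 from by omega, hgsucc]
          rw [← mul_assoc, hss12, zero_mul]
      | succ n ih =>
          intro k
          rw [show n + 1 + k + 1 = (n + k + 1) + 1 from by omega, hgsucc, hgsucc, star_mul,
            mul_assoc, ← mul_assoc (star s₂), hs2, hpg, ih]
    have hgorth : ∀ i j, i ≠ j → star (g i) * g j = 0 := by
      intro i j hij
      rcases lt_or_gt_of_ne hij with h | h
      · obtain ⟨k, rfl⟩ : ∃ k, j = i + k + 1 := ⟨j - i - 1, by omega⟩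
        exact hgorth0 i k
      · obtain ⟨k, rfl⟩ : ∃ k, i = j + k + 1 := ⟨i - j - 1, by omega⟩
        have := congrArg star (hgorth0 j k)
        simpa [star_mul, star_star] using this
    have htg : ∀ i, t * g i = 0 := by
      intro i; rw [← hpg, ← mul_assoc, tp0, zero_mul]
    refine ⟨fun i => g i * t, ?_, ?_, ?_, ?_⟩
    · intro i
      rw [star_mul, mul_assoc, ← mul_assoc (star (g i)), hgg, pt, htt]
    · intro i
      rw [mul_assoc, tp0, mul_zero]
    · intro i
      rw [← mul_assoc, hpg]
    · intro i j hij
      rw [star_mul, mul_assoc, ← mul_assoc (star (g i)), hgorth i j hij, zero_mul, mul_zero]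
  -- notation
  set b₁ : A := p * a * p with hb₁
  set c : A := (1 - p) * a * (1 - p) with hcdef
  set b : A := b₁ + c with hbdef
  set u₀ : A := p + p - 1 with hu₀def
  have hu₀sa : star u₀ = u₀ := by rw [hu₀def]; simp [sp]
  have hu₀u : u₀ * u₀ = 1 := by
    have h : u₀ * u₀ = p * p + p * p + p * p + p * p - (p + p + p + p) + 1 := by
      rw [hu₀def]; noncomm_ring
    rw [h, hp_idem]; abel
  have hu₀mem : u₀ ∈ unitary A :=
    Unitary.mem_iff.mpr ⟨by rw [hu₀sa, hu₀u], by rw [hu₀sa, hu₀u]⟩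
  have hb2 : b = (2:ℝ)⁻¹ • (a + u₀ * a * u₀) := by
    have h1 : a + u₀ * a * u₀ = b + b := by rw [hbdef, hb₁, hcdef, hu₀def]; noncomm_ring
    rw [h1, smul_add, ← add_smul]; norm_num
  -- more T facts
  have hpsT : ∀ i, p * star (T i) = 0 := by
    intro i; have h := congrArg star (hTp0 i); simpa [star_mul, sp] using h
  have hsTp : ∀ i, star (T i) * p = star (T i) := by
    intro i; have h := congrArg star (hpT i); simpa [star_mul, sp] using h
  have hTT0 : ∀ i, T i * T i = 0 := fun i => by
    calc T i * T i = T i * p * T i := by rw [mul_assoc, hpT i]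
      _ = 0 := by rw [hTp0 i, zero_mul]
  have hsTsT : ∀ i, star (T i) * star (T i) = 0 := fun i => by
    have h := congrArg star (hTT0 i); simpa [star_mul] using h
  have hfT : ∀ i, (T i * star (T i)) * T i = T i := fun i => by
    rw [mul_assoc, hTiso i, mul_sub, mul_one, hTp0 i, sub_zero]
  have hTf : ∀ i, T i * (T i * star (T i)) = 0 := fun i => by
    rw [← mul_assoc, hTT0 i, zero_mul]
  have hsTf : ∀ i, star (T i) * (T i * star (T i)) = star (T i) := fun i => by
    rw [← mul_assoc, hTiso i, sub_mul, one_mul, hpsT i, sub_zero]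
  have hfsT : ∀ i, (T i * star (T i)) * star (T i) = 0 := fun i => by
    rw [mul_assoc, hsTsT i, mul_zero]
  have hfp : ∀ i, (T i * star (T i)) * p = T i * star (T i) := fun i => by
    rw [mul_assoc, hsTp i]
  have hpf : ∀ i, p * (T i * star (T i)) = T i * star (T i) := fun i => by
    rw [← mul_assoc, hpT i]
  have hff : ∀ i, (T i * star (T i)) * (T i * star (T i)) = T i * star (T i) := fun i => by
    rw [← mul_assoc, hfT i]
  -- the unitaries u i
  obtain ⟨u, humem, husa, hub⟩ :
      ∃ u : ℕ → A, (∀ i, u i ∈ unitary A) ∧ (∀ i, star (u i) = u i) ∧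
        (∀ i, u i * b * u i = T i * c * star (T i) + u i * b₁ * u i) := by
    have husa' : ∀ i, star (T i + star (T i) + (p - T i * star (T i)))
        = T i + star (T i) + (p - T i * star (T i)) := by
      intro i
      have h : star (T i * star (T i)) = T i * star (T i) := by rw [star_mul, star_star]
      rw [star_add, star_add, star_sub, star_star, sp, h]
      abel
    have huu' : ∀ i, (T i + star (T i) + (p - T i * star (T i)))
        * (T i + star (T i) + (p - T i * star (T i))) = 1 := by
      intro i
      have hpf2 : (p - T i * star (T i)) * (p - T i * star (T i)) = p - T i * star (T i) := by
        have h : (p - T i * star (T i)) * (p - T i * star (T i))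
            = p * p - p * (T i * star (T i)) - (T i * star (T i)) * p
              + (T i * star (T i)) * (T i * star (T i)) := by noncomm_ring
        rw [h, hp_idem, hpf i, hfp i, hff i]; abel
      have hTpf : T i * (p - T i * star (T i)) = 0 := by
        rw [mul_sub, hTp0 i, hTf i, sub_zero]
      have hsTpf : star (T i) * (p - T i * star (T i)) = 0 := by
        rw [mul_sub, hsTp i, hsTf i, sub_self]
      have hpfT : (p - T i * star (T i)) * T i = 0 := by
        rw [sub_mul, hpT i, hfT i, sub_self]
      have hpfsT : (p - T i * star (T i)) * star (T i) = 0 := by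
        rw [sub_mul, hpsT i, hfsT i, sub_zero]
      have hexp : (T i + star (T i) + (p - T i * star (T i)))
          * (T i + star (T i) + (p - T i * star (T i)))
          = T i * T i + T i * star (T i) + T i * (p - T i * star (T i))
            + (star (T i) * T i + star (T i) * star (T i) + star (T i) * (p - T i * star (T i)))
            + ((p - T i * star (T i)) * T i + (p - T i * star (T i)) * star (T i)
              + (p - T i * star (T i)) * (p - T i * star (T i))) := by noncomm_ring
      rw [hexp, hTT0 i, hTpf, hsTsT i, hsTpf, hpfT, hpfsT, hpf2, hTiso i]
      abel
    refine ⟨fun i => T i + star (T i) + (p - T i * star (T i)), fun i => ?_, husa', fun i => ?_⟩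
    · exact Unitary.mem_iff.mpr ⟨by rw [husa' i, huu' i], by rw [husa' i, huu' i]⟩
    · dsimp only
      have hsT1p : star (T i) * (1 - p) = 0 := by rw [mul_sub, mul_one, hsTp i, sub_self]
      have h1 : star (T i) * c = 0 := by
        rw [hcdef]
        calc star (T i) * ((1 - p) * a * (1 - p))
            = (star (T i) * (1 - p)) * (a * (1 - p)) := by noncomm_ring
          _ = 0 := by rw [hsT1p, zero_mul]
      have hpf1p : (p - T i * star (T i)) * (1 - p) = 0 := by
        have h : (p - T i * star (T i)) * (1 - p)
            = p - p * p - T i * star (T i) + (T i * star (T i)) * p := by noncomm_ring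
        rw [h, hp_idem, hfp i]; abel
      have h2 : (p - T i * star (T i)) * c = 0 := by
        rw [hcdef]
        calc (p - T i * star (T i)) * ((1 - p) * a * (1 - p))
            = ((p - T i * star (T i)) * (1 - p)) * (a * (1 - p)) := by noncomm_ring
          _ = 0 := by rw [hpf1p, zero_mul]
      have h1pT : (1 - p) * T i = 0 := by rw [sub_mul, one_mul, hpT i, sub_self]
      have h3 : c * T i = 0 := by
        rw [hcdef]
        calc (1 - p) * a * (1 - p) * T i = (1 - p) * a * ((1 - p) * T i) := by noncomm_ring
          _ = 0 := by rw [h1pT, mul_zero]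
      have h1ppf : (1 - p) * (p - T i * star (T i)) = 0 := by
        have h : (1 - p) * (p - T i * star (T i))
            = p - T i * star (T i) - p * p + p * (T i * star (T i)) := by noncomm_ring
        rw [h, hp_idem, hpf i]; abel
      have h4 : c * (p - T i * star (T i)) = 0 := by
        rw [hcdef]
        calc (1 - p) * a * (1 - p) * (p - T i * star (T i))
            = (1 - p) * a * ((1 - p) * (p - T i * star (T i))) := by noncomm_ring
          _ = 0 := by rw [h1ppf, mul_zero]
      have l1 : (T i + star (T i) + (p - T i * star (T i))) * c = T i * c := by
        rw [add_mul, add_mul, h1, h2, add_zero, add_zero]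
      have l2 : T i * c * (T i + star (T i) + (p - T i * star (T i)))
          = T i * c * star (T i) := by
        calc T i * c * (T i + star (T i) + (p - T i * star (T i)))
            = T i * (c * T i) + T i * c * star (T i) + T i * (c * (p - T i * star (T i))) := by
              noncomm_ring
          _ = T i * c * star (T i) := by rw [h3, h4]; simp
      calc (T i + star (T i) + (p - T i * star (T i))) * b
            * (T i + star (T i) + (p - T i * star (T i)))
          = (T i + star (T i) + (p - T i * star (T i))) * b₁
              * (T i + star (T i) + (p - T i * star (T i)))
            + ((T i + star (T i) + (p - T i * star (T i))) * c)
              * (T i + star (T i) + (p - T i * star (T i))) := by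
            rw [hbdef]; noncomm_ring
        _ = (T i + star (T i) + (p - T i * star (T i))) * b₁
              * (T i + star (T i) + (p - T i * star (T i)))
            + T i * c * star (T i) := by rw [l1, l2]
        _ = T i * c * star (T i)
            + (T i + star (T i) + (p - T i * star (T i))) * b₁
              * (T i + star (T i) + (p - T i * star (T i))) := by rw [add_comm]
  -- choose n large
  obtain ⟨n, hn⟩ := exists_nat_gt (‖c‖ / δ)
  set N : ℕ := n + 1 with hNdef
  have hNpos : (0:ℝ) < (N:ℝ) := by exact_mod_cast Nat.succ_pos n
  have hNne : (N:ℝ) ≠ 0 := hNpos.ne'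
  have hcN : (N:ℝ)⁻¹ * ‖c‖ ≤ δ := by
    have h1 : ‖c‖ / δ < (N:ℝ) := lt_of_lt_of_le hn (by exact_mod_cast Nat.le_succ n)
    have h2 : ‖c‖ < (N:ℝ) * δ := by rw [div_lt_iff₀ hδ] at h1; linarith
    have h3 : (N:ℝ)⁻¹ * ‖c‖ ≤ (N:ℝ)⁻¹ * ((N:ℝ) * δ) :=
      mul_le_mul_of_nonneg_left h2.le (by positivity)
    calc (N:ℝ)⁻¹ * ‖c‖ ≤ (N:ℝ)⁻¹ * ((N:ℝ) * δ) := h3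
      _ = δ := by rw [← mul_assoc, inv_mul_cancel₀ hNne, one_mul]
  set S1 : A := ∑ i ∈ Finset.range N, T i * c * star (T i) with hS1def
  set S2 : A := ∑ i ∈ Finset.range N, u i * b₁ * u i with hS2def
  set x : A := (N:ℝ)⁻¹ • ∑ i ∈ Finset.range N, u i * b * u i with hxdef
  -- membership in the Dixmier set
  have hbsum : ∀ i, u i * b * u i
      = (2:ℝ)⁻¹ • (u i * a * star (u i)) + (2:ℝ)⁻¹ • ((u i * u₀) * a * star (u i * u₀)) := by
    intro i
    have h1 : u i * (a + u₀ * a * u₀) * u i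
        = u i * a * u i + u i * u₀ * a * (u₀ * u i) := by noncomm_ring
    calc u i * b * u i = u i * ((2:ℝ)⁻¹ • (a + u₀ * a * u₀)) * u i := by rw [hb2]
      _ = (2:ℝ)⁻¹ • (u i * (a + u₀ * a * u₀) * u i) := by
          rw [mul_smul_comm, smul_mul_assoc]
      _ = (2:ℝ)⁻¹ • (u i * a * u i) + (2:ℝ)⁻¹ • (u i * u₀ * a * (u₀ * u i)) := by
          rw [h1, smul_add]
      _ = (2:ℝ)⁻¹ • (u i * a * star (u i)) + (2:ℝ)⁻¹ • ((u i * u₀) * a * star (u i * u₀)) := by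
          rw [star_mul, hu₀sa, husa i]
  have hyK : ∀ i, u i * b * u i ∈ convexHull ℝ S := by
    intro i
    rw [hbsum i]
    have m1 : u i * a * star (u i) ∈ S := ⟨u i, humem i, rfl⟩
    have m2 : (u i * u₀) * a * star (u i * u₀) ∈ S := ⟨u i * u₀, mul_mem (humem i) hu₀mem, rfl⟩
    exact (convex_convexHull ℝ S) (subset_convexHull ℝ S m1) (subset_convexHull ℝ S m2)
      (by norm_num) (by norm_num) (by norm_num)
  have hxK : x ∈ dixmierSet a := by
    have hx1 : x = ∑ i ∈ Finset.range N, (N:ℝ)⁻¹ • (u i * b * u i) := by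
      rw [hxdef, Finset.smul_sum]
    have hsum1 : ∑ _i ∈ Finset.range N, (N:ℝ)⁻¹ = (1:ℝ) := by
      rw [Finset.sum_const, Finset.card_range, nsmul_eq_mul]
      field_simp
    have hmem : x ∈ convexHull ℝ S := by
      rw [hx1]
      exact (convex_convexHull ℝ S).sum_mem (fun i _ => by positivity) hsum1 (fun i _ => hyK i)
    exact subset_closure hmem
  -- split the average
  have hsplit : ∑ i ∈ Finset.range N, u i * b * u i = S1 + S2 := by
    rw [hS1def, hS2def, ← Finset.sum_add_distrib]
    exact Finset.sum_congr rfl fun i _ => hub i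
  -- bound on S2
  have hS2bound : ‖S2‖ ≤ (N:ℝ) * ε := by
    rw [hS2def]
    refine (norm_sum_le _ _).trans ?_
    have hone : ∀ i ∈ Finset.range N, ‖u i * b₁ * u i‖ ≤ ε := by
      intro i _
      have hnu : ‖u i‖ = 1 := CStarRing.norm_of_mem_unitary (humem i)
      calc ‖u i * b₁ * u i‖ ≤ ‖u i * b₁‖ * ‖u i‖ := norm_mul_le _ _
        _ ≤ ‖u i‖ * ‖b₁‖ * ‖u i‖ :=
            mul_le_mul_of_nonneg_right (norm_mul_le _ _) (norm_nonneg _)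
        _ = ‖b₁‖ := by rw [hnu]; ring
        _ ≤ ε := hpap
    calc ∑ i ∈ Finset.range N, ‖u i * b₁ * u i‖ ≤ ∑ _i ∈ Finset.range N, ε :=
        Finset.sum_le_sum hone
      _ = (N:ℝ) * ε := by rw [Finset.sum_const, Finset.card_range, nsmul_eq_mul]
  -- bound on S1 via the C*-identity
  have hq_c : (1 - p) * c = c := by
    rw [hcdef]
    calc (1 - p) * ((1 - p) * a * (1 - p)) = ((1 - p) * (1 - p)) * a * (1 - p) := by noncomm_ring
      _ = (1 - p) * a * (1 - p) := by rw [hq_idem]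
  have hstarS1 : star S1 = ∑ i ∈ Finset.range N, T i * star c * star (T i) := by
    rw [hS1def, star_sum]
    exact Finset.sum_congr rfl fun i _ => by simp [star_mul, star_star, mul_assoc]
  have hdiag : ∀ i ∈ Finset.range N,
      (∑ j ∈ Finset.range N, (T i * star c * star (T i)) * (T j * c * star (T j)))
        = T i * (star c * c) * star (T i) := by
    intro i hi
    have h0 : ∀ j ∈ Finset.range N, j ≠ i →
        (T i * star c * star (T i)) * (T j * c * star (T j)) = 0 := by
      intro j _ hji
      calc (T i * star c * star (T i)) * (T j * c * star (T j))
          = T i * star c * (star (T i) * T j) * (c * star (T j)) := by noncomm_ring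
        _ = 0 := by rw [hTorth i j (Ne.symm hji)]; simp
    rw [Finset.sum_eq_single i h0 (fun h => absurd hi h)]
    calc (T i * star c * star (T i)) * (T i * c * star (T i))
        = T i * star c * (star (T i) * T i) * (c * star (T i)) := by noncomm_ring
      _ = T i * star c * ((1 - p) * c) * star (T i) := by rw [hTiso i]; noncomm_ring
      _ = T i * (star c * c) * star (T i) := by rw [hq_c]; noncomm_ring
  have hSS : star S1 * S1 = ∑ i ∈ Finset.range N, T i * (star c * c) * star (T i) := by
    rw [hstarS1, hS1def, Finset.sum_mul_sum]
    exact Finset.sum_congr rfl hdiag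
  have hrpos : (0:ℝ) ≤ ‖c‖ * ‖c‖ := mul_nonneg (norm_nonneg c) (norm_nonneg c)
  have hr : star c * c ≤ algebraMap ℝ A (‖c‖ * ‖c‖) := by
    have h := IsSelfAdjoint.le_algebraMap_norm_self (IsSelfAdjoint.star_mul_self c)
    rwa [CStarRing.norm_star_mul_self] at h
  set F : A := ∑ i ∈ Finset.range N, T i * star (T i) with hFdef
  have hterm : ∀ i ∈ Finset.range N, T i * (star c * c) * star (T i)
      ≤ (‖c‖ * ‖c‖) • (T i * star (T i)) := by
    intro i _
    have h := star_right_conjugate_le_conjugate hr (T i)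
    refine h.trans_eq ?_
    rw [Algebra.algebraMap_eq_smul_one, mul_smul_comm, mul_one, smul_mul_assoc]
  have hsum_le : star S1 * S1 ≤ (‖c‖ * ‖c‖) • F := by
    rw [hSS, hFdef, Finset.smul_sum]
    exact Finset.sum_le_sum hterm
  have hFsa : star F = F := by
    rw [hFdef, star_sum]
    exact Finset.sum_congr rfl fun i _ => by rw [star_mul, star_star]
  have hFdiag : ∀ i ∈ Finset.range N,
      (∑ j ∈ Finset.range N, (T i * star (T i)) * (T j * star (T j))) = T i * star (T i) := by
    intro i hi
    have h0 : ∀ j ∈ Finset.range N, j ≠ i →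
        (T i * star (T i)) * (T j * star (T j)) = 0 := by
      intro j _ hji
      calc (T i * star (T i)) * (T j * star (T j))
          = T i * (star (T i) * T j) * star (T j) := by noncomm_ring
        _ = 0 := by rw [hTorth i j (Ne.symm hji)]; simp
    rw [Finset.sum_eq_single i h0 (fun h => absurd hi h), hff i]
  have hFidem : F * F = F := by
    rw [hFdef, Finset.sum_mul_sum]
    exact Finset.sum_congr rfl hFdiag
  have hFnorm : ‖F‖ ≤ 1 := by
    have h : ‖F‖ * ‖F‖ = ‖F‖ := by
      calc ‖F‖ * ‖F‖ = ‖star F * F‖ := (CStarRing.norm_star_mul_self).symm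
        _ = ‖F‖ := by rw [hFsa, hFidem]
    nlinarith [norm_nonneg F]
  have hSSnorm : ‖star S1 * S1‖ ≤ ‖c‖ * ‖c‖ := by
    have h1 : (0:A) ≤ star S1 * S1 := star_mul_self_nonneg S1
    have h2 := CStarAlgebra.norm_le_norm_of_nonneg_of_le h1 hsum_le
    calc ‖star S1 * S1‖ ≤ ‖(‖c‖ * ‖c‖) • F‖ := h2
      _ = |‖c‖ * ‖c‖| * ‖F‖ := by rw [norm_smul, Real.norm_eq_abs]
      _ = (‖c‖ * ‖c‖) * ‖F‖ := by rw [abs_of_nonneg hrpos]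
      _ ≤ (‖c‖ * ‖c‖) * 1 := mul_le_mul_of_nonneg_left hFnorm hrpos
      _ = ‖c‖ * ‖c‖ := mul_one _
  have hS1norm : ‖S1‖ ≤ ‖c‖ := by
    have h := CStarRing.norm_star_mul_self (x := S1)
    nlinarith [norm_nonneg S1, norm_nonneg c]
  -- conclude
  refine ⟨x, hxK, ?_⟩
  have hxnorm : ‖x‖ ≤ (N:ℝ)⁻¹ * (‖S1‖ + ‖S2‖) := by
    rw [hxdef, hsplit, norm_smul]
    have ha : ‖((N:ℝ)⁻¹)‖ = (N:ℝ)⁻¹ := by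
      rw [Real.norm_eq_abs, abs_of_nonneg (by positivity)]
    rw [ha]
    exact mul_le_mul_of_nonneg_left (norm_add_le _ _) (by positivity)
  have h2 : (N:ℝ)⁻¹ * (‖S1‖ + ‖S2‖) ≤ (N:ℝ)⁻¹ * (‖c‖ + (N:ℝ) * ε) :=
    mul_le_mul_of_nonneg_left (add_le_add hS1norm hS2bound) (by positivity)
  have h3 : (N:ℝ)⁻¹ * (‖c‖ + (N:ℝ) * ε) = (N:ℝ)⁻¹ * ‖c‖ + ε := by
    field_simp
  linarith [hxnorm, h2, h3, hcN]
end

section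
/- Assume the abstract reduced crossed product setup for an action α : Γ → Aut(A) with (SAveP), with ambient C*-algebra B, unitaries (u_t), and conditional expectation E : B → A. Let x ∈ B be such that E(x) is central in A, i.e., E(x) a = a E(x) for all a ∈ A. Then E(x) ∈ C_A(x), the norm-closed convex hull in B of {v x v* : v a unitary element of A}. -/
/-- For a unital C*-subalgebra `A` of `B`, a map `f` on `A`, and `b ∈ B`, the norm-closed
convex hull in `B` of `{v * b * star (f v) : v a unitary element of A}`.  For `f = id`
this is `C_A(b)`; for `f = β` an automorphism of `A` it is `C_A^β(b)`. -/
def relC {B : Type*} [NormedRing B] [StarRing B] [CStarRing B] [NormedAlgebra ℂ B]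
    [CompleteSpace B] [StarModule ℂ B]
    (A : StarSubalgebra ℂ B) (f : ↥A → ↥A) (b : B) : Set B :=
  closure (convexHull ℝ
    {y : B | ∃ v : ↥A, v ∈ unitary ↥A ∧ y = (v : B) * b * star ((f v : ↥A) : B)})

section Aux

variable {B : Type*} [NormedRing B] [StarRing B] [CStarRing B] [NormedAlgebra ℂ B]
    [CompleteSpace B] [StarModule ℂ B]

/-- An averaging datum: a finite convex combination of unitaries of `A`. -/
structure Avg (A : StarSubalgebra ℂ B) where
  ι : Type
  [fin : Fintype ι]
  w : ι → ℝ
  v : ι → ↥A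
  hw : ∀ i, 0 ≤ w i
  hv : ∀ i, v i ∈ unitary ↥A
  hsum : ∑ i, w i = 1

attribute [instance] Avg.fin

namespace Avg

variable {A : StarSubalgebra ℂ B}

lemma coe_unitary_mem {v : ↥A} (hv : v ∈ unitary ↥A) : (v : B) ∈ unitary B := by
  rw [Unitary.mem_iff] at hv ⊢
  constructor
  · calc star (v : B) * v = ((star v * v : ↥A) : B) := by simp
      _ = 1 := by rw [hv.1]; simp
  · calc (v : B) * star (v : B) = ((v * star v : ↥A) : B) := by simp
      _ = 1 := by rw [hv.2]; simp

/-- The averaging operator `y ↦ ∑ wᵢ • vᵢ y vᵢ*`. -/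
noncomputable def phi (Φ : Avg A) (y : B) : B :=
  ∑ i, Φ.w i • ((Φ.v i : B) * y * star (Φ.v i : B))

lemma phi_add (Φ : Avg A) (y z : B) : Φ.phi (y + z) = Φ.phi y + Φ.phi z := by
  simp [phi, mul_add, add_mul, smul_add, Finset.sum_add_distrib]

lemma phi_sub (Φ : Avg A) (y z : B) : Φ.phi (y - z) = Φ.phi y - Φ.phi z := by
  simp [phi, mul_sub, sub_mul, smul_sub, Finset.sum_sub_distrib]

lemma phi_sum (Φ : Avg A) {γ : Type*} (F : Finset γ) (f : γ → B) :
    Φ.phi (∑ t ∈ F, f t) = ∑ t ∈ F, Φ.phi (f t) := by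
  simp only [phi, Finset.mul_sum, Finset.sum_mul, Finset.smul_sum]
  exact Finset.sum_comm

lemma norm_phi_le (Φ : Avg A) (y : B) : ‖Φ.phi y‖ ≤ ‖y‖ := by
  calc ‖Φ.phi y‖ ≤ ∑ i, ‖Φ.w i • ((Φ.v i : B) * y * star (Φ.v i : B))‖ :=
        norm_sum_le _ _
    _ = ∑ i, Φ.w i * ‖y‖ := by
        refine Finset.sum_congr rfl fun i _ => ?_
        rw [norm_smul, Real.norm_eq_abs, abs_of_nonneg (Φ.hw i)]
        congr 1
        rw [CStarRing.norm_mul_mem_unitary _ (Unitary.star_mem (coe_unitary_mem (Φ.hv i))),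
          CStarRing.norm_mem_unitary_mul _ (coe_unitary_mem (Φ.hv i))]
    _ = ‖y‖ := by rw [← Finset.sum_mul, Φ.hsum, one_mul]

/-- Composition of averaging data. -/
noncomputable def comp (Φ Ψ : Avg A) : Avg A where
  ι := Φ.ι × Ψ.ι
  w := fun p => Φ.w p.1 * Ψ.w p.2
  v := fun p => Φ.v p.1 * Ψ.v p.2
  hw := fun p => mul_nonneg (Φ.hw _) (Ψ.hw _)
  hv := fun p => mul_mem (Φ.hv _) (Ψ.hv _)
  hsum := by
    rw [Fintype.sum_prod_type]
    simp only [← Finset.mul_sum, Ψ.hsum, mul_one, Φ.hsum]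

lemma phi_comp (Φ Ψ : Avg A) (y : B) : (Φ.comp Ψ).phi y = Φ.phi (Ψ.phi y) := by
  simp only [phi, comp, Fintype.sum_prod_type, Finset.mul_sum, Finset.sum_mul,
    Finset.smul_sum, mul_smul_comm, smul_mul_assoc, smul_smul, MulMemClass.coe_mul,
    star_mul, mul_assoc]
  exact Fintype.sum_prod_type _

lemma phi_mem (Φ : Avg A) (y : B) :
    Φ.phi y ∈ convexHull ℝ
      {z : B | ∃ v : ↥A, v ∈ unitary ↥A ∧ z = (v : B) * y * star ((v : ↥A) : B)} :=
  mem_convexHull_of_exists_fintype Φ.w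
    (fun i => (Φ.v i : B) * y * star (Φ.v i : B)) Φ.hw Φ.hsum
    (fun i => ⟨Φ.v i, Φ.hv i, rfl⟩) rfl

/-- The trivial averaging datum. -/
noncomputable def one (A : StarSubalgebra ℂ B) : Avg A where
  ι := PUnit
  w := fun _ => 1
  v := fun _ => 1
  hw := fun _ => zero_le_one
  hv := fun _ => one_mem (unitary ↥A)
  hsum := by simp

end Avg

section Crossed

variable {A : StarSubalgebra ℂ B} {Γ : Type*} [Group Γ]
variable (u : Γ →* unitary B) (α : Γ → (↥A ≃⋆ₐ[ℂ] ↥A))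
variable (hαu : ∀ (t : Γ) (a : ↥A), ((α t a : ↥A) : B) = (u t : B) * (a : B) * star (u t : B))

lemma phi_coef_mem (Φ : Avg A) (t : Γ) (a : ↥A) :
    (∑ i, Φ.w i • ((Φ.v i : B) * (a : B) * star ((α t (Φ.v i) : ↥A) : B))) ∈ A := by
  refine sum_mem fun i _ => ?_
  rw [← Complex.coe_smul]
  refine SMulMemClass.smul_mem _ (mul_mem (mul_mem (SetLike.coe_mem _) (SetLike.coe_mem _)) ?_)
  exact star_mem (SetLike.coe_mem _)

include hαu in
lemma phi_mul_u (Φ : Avg A) (t : Γ) (a : ↥A) :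
    Φ.phi ((a : B) * (u t : B)) =
      (∑ i, Φ.w i • ((Φ.v i : B) * (a : B) * star ((α t (Φ.v i) : ↥A) : B))) * (u t : B) := by
  rw [Avg.phi, Finset.sum_mul]
  refine Finset.sum_congr rfl fun i _ => ?_
  rw [smul_mul_assoc]
  congr 1
  rw [hαu, star_mul, star_mul, star_star]
  simp only [mul_assoc, Unitary.coe_star_mul_self, mul_one]

include hαu in
lemma exists_avg_small
    (hSAveP : ∀ t : Γ, t ≠ 1 → ∀ b ∈ A, (0 : B) ∈ relC A (⇑(α t)) b)
    (t : Γ) (ht : t ≠ 1) (a : ↥A) {ε : ℝ} (hε : 0 < ε) :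
    ∃ Φ : Avg A, ‖Φ.phi ((a : B) * (u t : B))‖ < ε := by
  have h0 := hSAveP t ht (a : B) (SetLike.coe_mem a)
  rw [relC, Metric.mem_closure_iff] at h0
  obtain ⟨z, hz, hdist⟩ := h0 ε hε
  rw [mem_convexHull_iff_exists_fintype] at hz
  obtain ⟨ι, _, w, zfun, hw0, hw1, hzs, hzx⟩ := hz
  choose v hv hveq using hzs
  refine ⟨⟨ι, w, v, hw0, hv, hw1⟩, ?_⟩
  rw [phi_mul_u u α hαu]
  have hco : (∑ i, w i • ((v i : B) * (a : B) * star ((α t (v i) : ↥A) : B))) = z := by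
    rw [← hzx]
    exact Finset.sum_congr rfl fun i _ => by rw [hveq i]
  rw [hco, CStarRing.norm_mul_mem_unitary _ (SetLike.coe_mem (u t))]
  calc ‖z‖ = dist 0 z := by rw [dist_eq_norm, zero_sub, norm_neg]
    _ < ε := hdist

include hαu in
lemma avg_kill
    (hSAveP : ∀ t : Γ, t ≠ 1 → ∀ b ∈ A, (0 : B) ∈ relC A (⇑(α t)) b)
    (F : Finset Γ) :
    (1 : Γ) ∉ F → ∀ (a : Γ → ↥A) (ε : ℝ), 0 < ε →
    ∃ Φ : Avg A, ‖Φ.phi (∑ t ∈ F, (a t : B) * (u t : B))‖ < ε := by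
  classical
  induction F using Finset.induction_on with
  | empty =>
    intro _ a ε hε
    exact ⟨Avg.one A, by simpa [Avg.phi] using hε⟩
  | @insert s F' hs ih =>
    intro hF a ε hε
    have hs1 : s ≠ 1 := fun h => hF (h ▸ Finset.mem_insert_self s F')
    have hF1 : (1 : Γ) ∉ F' := fun h => hF (Finset.mem_insert_of_mem h)
    obtain ⟨Φ₁, h1⟩ := exists_avg_small u α hαu hSAveP s hs1 (a s) (half_pos hε)
    set a' : Γ → ↥A := fun t =>
      ⟨∑ i, Φ₁.w i • ((Φ₁.v i : B) * (a t : B) * star ((α t (Φ₁.v i) : ↥A) : B)),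
        phi_coef_mem α Φ₁ t (a t)⟩ with ha'
    obtain ⟨Φ₂, h2⟩ := ih hF1 a' (ε / 2) (half_pos hε)
    refine ⟨Φ₂.comp Φ₁, ?_⟩
    rw [Finset.sum_insert hs, Avg.phi_comp, Avg.phi_add]
    have hrw : Φ₁.phi (∑ t ∈ F', (a t : B) * (u t : B)) =
        ∑ t ∈ F', (a' t : B) * (u t : B) := by
      rw [Avg.phi_sum]
      exact Finset.sum_congr rfl fun t _ => phi_mul_u u α hαu Φ₁ t (a t)
    rw [hrw, Avg.phi_add]
    calc ‖Φ₂.phi (Φ₁.phi ((a s : B) * (u s : B))) +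
          Φ₂.phi (∑ t ∈ F', (a' t : B) * (u t : B))‖
        ≤ ‖Φ₂.phi (Φ₁.phi ((a s : B) * (u s : B)))‖ +
          ‖Φ₂.phi (∑ t ∈ F', (a' t : B) * (u t : B))‖ := norm_add_le _ _
      _ ≤ ‖Φ₁.phi ((a s : B) * (u s : B))‖ +
          ‖Φ₂.phi (∑ t ∈ F', (a' t : B) * (u t : B))‖ := by
          gcongr
          exact Φ₂.norm_phi_le _
      _ < ε / 2 + ε / 2 := by gcongr
      _ = ε := add_halves ε

lemma span_rep (y : B)
    (hy : y ∈ Submodule.span ℂ {x : B | ∃ a ∈ A, ∃ t : Γ, x = a * (u t : B)}) :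
    ∃ (F : Finset Γ) (a : Γ → ↥A), y = ∑ t ∈ F, (a t : B) * (u t : B) := by
  classical
  induction hy using Submodule.span_induction with
  | mem x hx =>
    obtain ⟨a, ha, t, rfl⟩ := hx
    exact ⟨{t}, fun s => if s = t then ⟨a, ha⟩ else 0, by simp⟩
  | zero => exact ⟨∅, fun _ => 0, by simp⟩
  | add x y hxm hym ihx ihy =>
    obtain ⟨F₁, a₁, rfl⟩ := ihx
    obtain ⟨F₂, a₂, rfl⟩ := ihy
    refine ⟨F₁ ∪ F₂,
      fun t => (if t ∈ F₁ then a₁ t else 0) + (if t ∈ F₂ then a₂ t else 0), ?_⟩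
    have hsplit : ∀ t, (((if t ∈ F₁ then a₁ t else 0) + (if t ∈ F₂ then a₂ t else 0) : ↥A) : B)
        * (u t : B) =
        (if t ∈ F₁ then (a₁ t : B) * (u t : B) else 0) +
        (if t ∈ F₂ then (a₂ t : B) * (u t : B) else 0) := by
      intro t
      push_cast
      rw [add_mul]
      congr 1 <;> split <;> simp
    rw [Finset.sum_congr rfl fun t _ => hsplit t, Finset.sum_add_distrib,
      Finset.sum_ite_mem, Finset.sum_ite_mem, Finset.union_inter_cancel_left,
      Finset.union_inter_cancel_right]
  | smul c x hxm ihx =>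
    obtain ⟨F, a, rfl⟩ := ihx
    refine ⟨F, fun t => c • a t, ?_⟩
    rw [Finset.smul_sum]
    refine Finset.sum_congr rfl fun t _ => ?_
    push_cast
    rw [smul_mul_assoc]

end Crossed

end Aux

/-- Lemma 3.1 (i): in the abstract reduced crossed product setup for an action
`α : Γ → Aut(A)` with (SAveP), with ambient C*-algebra `B`, implementing unitaries `u_t`
and canonical conditional expectation `E`, if `x ∈ B` and `E(x)` is central in `A`, then
`E(x) ∈ C_A(x)`. -/
theorem central_expectation_mem_dixmierSet
    {B : Type*} [NormedRing B] [StarRing B] [CStarRing B] [NormedAlgebra ℂ B]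
    [CompleteSpace B] [StarModule ℂ B]
    {Γ : Type*} [Group Γ]
    (A : StarSubalgebra ℂ B) (hA : IsClosed (A : Set B))
    (u : Γ →* unitary B)
    (α : Γ → (↥A ≃⋆ₐ[ℂ] ↥A))
    (hαu : ∀ (t : Γ) (a : ↥A), ((α t a : ↥A) : B) = (u t : B) * (a : B) * star (u t : B))
    (hdense : Dense (↑(Submodule.span ℂ
      {x : B | ∃ a ∈ A, ∃ t : Γ, x = a * (u t : B)}) : Set B))
    (E : B →L[ℂ] B) (hEmem : ∀ x : B, E x ∈ A) (hEnorm : ‖E‖ ≤ 1)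
    (hEe : ∀ a ∈ A, E (a * (u 1 : B)) = a)
    (hEt : ∀ a ∈ A, ∀ t : Γ, t ≠ 1 → E (a * (u t : B)) = 0)
    (hSAveP : ∀ t : Γ, t ≠ 1 → ∀ b ∈ A, (0 : B) ∈ relC A (⇑(α t)) b)
    (x : B) (hx : ∀ a ∈ A, E x * a = a * E x) :
    E x ∈ relC A id x := by
  classical
  have hu1 : ((u 1 : unitary B) : B) = 1 := by rw [map_one]; rfl
  rw [relC, Metric.mem_closure_iff]
  intro ε hε
  have hε4 : 0 < ε / 4 := by linarith
  obtain ⟨x₀, hx₀mem, hx₀⟩ := Metric.mem_closure_iff.mp (hdense x) (ε / 4) hε4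
  obtain ⟨F, a, hrep⟩ := span_rep u x₀ hx₀mem
  set G : Finset Γ := insert 1 F with hG
  set a' : Γ → ↥A := fun t => if t ∈ F then a t else 0 with ha'
  have hGrep : x₀ = ∑ t ∈ G, (a' t : B) * (u t : B) := by
    rw [hrep, hG, ha']
    have : ∀ t, ((if t ∈ F then a t else 0 : ↥A) : B) * (u t : B) =
        if t ∈ F then (a t : B) * (u t : B) else 0 := by
      intro t; split <;> simp
    rw [Finset.sum_congr rfl fun t _ => this t, Finset.sum_ite_mem]
    congr 1
    exact (Finset.inter_eq_right.mpr (Finset.subset_insert 1 F)).symm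
  have hEx₀ : E x₀ = (a' 1 : B) := by
    rw [hGrep, map_sum, Finset.sum_eq_single_of_mem 1 (Finset.mem_insert_self 1 F)
      (fun t _ ht1 => hEt _ (SetLike.coe_mem (a' t)) t ht1)]
    exact hEe _ (SetLike.coe_mem (a' 1))
  set c : B := ∑ t ∈ G.erase 1, (a' t : B) * (u t : B) with hc
  obtain ⟨Φ, hΦ⟩ := avg_kill u α hαu hSAveP (G.erase 1) (Finset.notMem_erase 1 G)
    a' (ε / 4) hε4
  rw [← hc] at hΦ
  refine ⟨Φ.phi x, ?_, ?_⟩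
  · simpa using Φ.phi_mem x
  · -- `Φ.phi` fixes `E x`
    have hfix : Φ.phi (E x) = E x := by
      have hterm : ∀ i, (Φ.v i : B) * E x * star (Φ.v i : B) = E x := by
        intro i
        rw [← hx _ (SetLike.coe_mem (Φ.v i)), mul_assoc,
          Unitary.mul_star_self_of_mem (Avg.coe_unitary_mem (Φ.hv i)), mul_one]
      rw [Avg.phi, Finset.sum_congr rfl fun i _ => congrArg (Φ.w i • ·) (hterm i),
        ← Finset.sum_smul, Φ.hsum, one_smul]
    have hsplit : x - E x = (x - x₀) + ((((a' 1 : B) - E x) * (u 1 : B)) + c) := by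
      have hx₀split : x₀ = (a' 1 : B) * (u 1 : B) + c := by
        rw [hGrep, hc]
        exact (Finset.add_sum_erase G (fun t => ((a' t : B) * (u t : B)))
          (Finset.mem_insert_self 1 F)).symm
      rw [hx₀split, hu1, mul_one, mul_one]
      abel
    have hkey : Φ.phi x - E x =
        Φ.phi (x - x₀) + (Φ.phi (((a' 1 : B) - E x) * (u 1 : B)) + Φ.phi c) := by
      rw [← Avg.phi_add, ← Avg.phi_add, ← hsplit]
      rw [Avg.phi_sub, hfix]
    have hb1 : ‖Φ.phi (x - x₀)‖ < ε / 4 := by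
      calc ‖Φ.phi (x - x₀)‖ ≤ ‖x - x₀‖ := Φ.norm_phi_le _
        _ < ε / 4 := by rw [← dist_eq_norm]; exact hx₀
    have hb2 : ‖Φ.phi (((a' 1 : B) - E x) * (u 1 : B))‖ < ε / 4 := by
      calc ‖Φ.phi (((a' 1 : B) - E x) * (u 1 : B))‖
          ≤ ‖((a' 1 : B) - E x) * (u 1 : B)‖ := Φ.norm_phi_le _
        _ = ‖(a' 1 : B) - E x‖ := by rw [hu1, mul_one]
        _ = ‖E (x₀ - x)‖ := by rw [map_sub, hEx₀]
        _ ≤ ‖E‖ * ‖x₀ - x‖ := E.le_opNorm _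
        _ ≤ 1 * ‖x₀ - x‖ := by gcongr
        _ = ‖x₀ - x‖ := one_mul _
        _ < ε / 4 := by rw [norm_sub_rev, ← dist_eq_norm]; exact hx₀
    have : ‖Φ.phi x - E x‖ < ε := by
      rw [hkey]
      calc ‖Φ.phi (x - x₀) + (Φ.phi (((a' 1 : B) - E x) * (u 1 : B)) + Φ.phi c)‖
          ≤ ‖Φ.phi (x - x₀)‖ + (‖Φ.phi (((a' 1 : B) - E x) * (u 1 : B))‖ + ‖Φ.phi c‖) := by
            refine (norm_add_le _ _).trans ?_
            gcongr
            exact norm_add_le _ _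
        _ < ε / 4 + (ε / 4 + ε / 4) := by gcongr
        _ < ε := by linarith
    rw [dist_eq_norm, norm_sub_rev]
    exact this
end

section
/- Assume the abstract reduced crossed product setup for an action α : Γ → Aut(A) with (SAveP), with ambient C*-algebra B, unitaries (u_t), and conditional expectation E : B → A. Then for every x ∈ B, dist(A, C_A(x)) = 0; that is, for every ε > 0 there exist a ∈ A and y ∈ C_A(x) (the norm-closed convex hull in B of {v x v* : v a unitary element of A}) with ‖a − y‖ < ε. -/
set_option linter.unusedSectionVars false
set_option linter.unusedVariables false


section Aux

variable {B : Type*} [NormedRing B] [StarRing B] [CStarRing B] [NormedAlgebra ℂ B]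
    [CompleteSpace B] [StarModule ℂ B]

/-- Averaging operators: finite convex combinations of conjugations by unitaries of `A`. -/
def IsAvg (A : StarSubalgebra ℂ B) (T : B → B) : Prop :=
  ∃ (ι : Type) (s : Finset ι) (w : ι → ℝ) (v : ι → B),
    (∀ i ∈ s, 0 ≤ w i) ∧ (∑ i ∈ s, w i = 1) ∧ (∀ i ∈ s, v i ∈ unitary B ∧ v i ∈ A) ∧
    ∀ x : B, T x = ∑ i ∈ s, w i • (v i * x * star (v i))

variable {A : StarSubalgebra ℂ B}

lemma isAvg_id : IsAvg A (id : B → B) := by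
  refine ⟨PUnit, {PUnit.unit}, fun _ => 1, fun _ => 1, by simp, by simp, fun _ _ => ⟨one_mem _, one_mem _⟩, ?_⟩
  intro x; simp

lemma IsAvg.comp {T S : B → B} (hT : IsAvg A T) (hS : IsAvg A S) : IsAvg A (T ∘ S) := by
  obtain ⟨ι, s, w, v, hw0, hw1, hv, hrep⟩ := hT
  obtain ⟨ι', s', w', v', hw0', hw1', hv', hrep'⟩ := hS
  refine ⟨ι × ι', s ×ˢ s', fun p => w p.1 * w' p.2, fun p => v p.1 * v' p.2, ?_, ?_, ?_, ?_⟩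
  · rintro ⟨i, j⟩ hij
    rw [Finset.mem_product] at hij
    exact mul_nonneg (hw0 _ hij.1) (hw0' _ hij.2)
  · rw [Finset.sum_product]
    simp_rw [← Finset.mul_sum, hw1']
    simpa using hw1
  · rintro ⟨i, j⟩ hij
    rw [Finset.mem_product] at hij
    exact ⟨mul_mem (hv _ hij.1).1 (hv' _ hij.2).1, mul_mem (hv _ hij.1).2 (hv' _ hij.2).2⟩
  · intro x
    rw [Function.comp_apply, hrep (S x), Finset.sum_product]
    refine Finset.sum_congr rfl fun i hi => ?_
    rw [hrep' x, Finset.mul_sum, Finset.sum_mul, Finset.smul_sum]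
    refine Finset.sum_congr rfl fun j hj => ?_
    rw [mul_smul_comm, smul_mul_assoc, smul_smul, star_mul]
    simp only [mul_assoc]


lemma IsAvg.map_add {T : B → B} (hT : IsAvg A T) (x y : B) : T (x + y) = T x + T y := by
  obtain ⟨ι, s, w, v, hw0, hw1, hv, hrep⟩ := hT
  simp [hrep, mul_add, add_mul, smul_add, Finset.sum_add_distrib]

lemma IsAvg.map_smul {T : B → B} (hT : IsAvg A T) (c : ℂ) (x : B) : T (c • x) = c • T x := by
  obtain ⟨ι, s, w, v, hw0, hw1, hv, hrep⟩ := hT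
  simp only [hrep, Finset.smul_sum, mul_smul_comm, smul_mul_assoc]
  exact Finset.sum_congr rfl fun i _ => (smul_comm _ _ _)

lemma IsAvg.map_zero {T : B → B} (hT : IsAvg A T) : T 0 = 0 := by
  obtain ⟨ι, s, w, v, hw0, hw1, hv, hrep⟩ := hT
  simp [hrep]

lemma IsAvg.lipschitz [Nontrivial B] {T : B → B} (hT : IsAvg A T) (x y : B) :
    ‖T x - T y‖ ≤ ‖x - y‖ := by
  obtain ⟨ι, s, w, v, hw0, hw1, hv, hrep⟩ := hT
  have : T x - T y = ∑ i ∈ s, w i • (v i * (x - y) * star (v i)) := by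
    simp [hrep, mul_sub, sub_mul, smul_sub, Finset.sum_sub_distrib]
  rw [this]
  calc ‖∑ i ∈ s, w i • (v i * (x - y) * star (v i))‖
      ≤ ∑ i ∈ s, ‖w i • (v i * (x - y) * star (v i))‖ := norm_sum_le _ _
    _ ≤ ∑ i ∈ s, w i * ‖x - y‖ := by
        refine Finset.sum_le_sum fun i hi => ?_
        rw [norm_smul, Real.norm_eq_abs, abs_of_nonneg (hw0 i hi)]
        refine mul_le_mul_of_nonneg_left (le_of_eq ?_) (hw0 i hi)
        rw [CStarRing.norm_mul_mem_unitary _ (Unitary.star_mem (hv i hi).1),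
          CStarRing.norm_mem_unitary_mul _ (hv i hi).1]
    _ = ‖x - y‖ := by rw [← Finset.sum_mul, hw1, one_mul]

lemma IsAvg.mapsA {T : B → B} (hT : IsAvg A T) {a : B} (ha : a ∈ A) : T a ∈ A := by
  obtain ⟨ι, s, w, v, hw0, hw1, hv, hrep⟩ := hT
  rw [hrep]
  refine sum_mem fun i hi => ?_
  rw [← algebraMap_smul ℂ (w i)]
  exact SMulMemClass.smul_mem _ (mul_mem (mul_mem (hv i hi).2 ha) (star_mem (hv i hi).2))

lemma IsAvg.mem_convexHull {T : B → B} (hT : IsAvg A T) (x : B) :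
    T x ∈ convexHull ℝ
      {y : B | ∃ v : ↥A, v ∈ unitary ↥A ∧ y = (v : B) * x * star ((v : ↥A) : B)} := by
  obtain ⟨ι, s, w, v, hw0, hw1, hv, hrep⟩ := hT
  rw [hrep, ← Finset.centerMass_eq_of_sum_1 _ _ hw1]
  refine Finset.centerMass_mem_convexHull _ hw0 (by rw [hw1]; norm_num) fun i hi => ?_
  refine ⟨⟨v i, (hv i hi).2⟩, ?_, rfl⟩
  rw [Unitary.mem_iff]
  constructor <;> ext <;>
    simp [((Unitary.mem_iff).mp (hv i hi).1).1, ((Unitary.mem_iff).mp (hv i hi).1).2]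


lemma coe_mem_unitary {va : ↥A} (h : va ∈ unitary ↥A) : (va : B) ∈ unitary B := by
  rw [Unitary.mem_iff] at h ⊢
  exact ⟨by simpa using congrArg Subtype.val h.1, by simpa using congrArg Subtype.val h.2⟩

section Gamma

variable {Γ : Type*} [Group Γ] (u : Γ →* unitary B)

lemma key_conj (t : Γ) (v x : B) :
    v * (x * (u t : B)) * star v =
      (v * x * ((u t : B) * star v * star (u t : B))) * (u t : B) := by
  have h : star ((u t : B)) * (u t : B) = 1 := ((Unitary.mem_iff).mp (u t).2).1
  simp only [mul_assoc, h, mul_one]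

variable (α : Γ → (↥A ≃⋆ₐ[ℂ] ↥A))
  (hαu : ∀ (t : Γ) (a : ↥A), ((α t a : ↥A) : B) = (u t : B) * (a : B) * star (u t : B))

include hαu in
lemma IsAvg.coeff {T : B → B} (hT : IsAvg A T) (t : Γ) {b : B} (hb : b ∈ A) :
    ∃ c ∈ A, T (b * (u t : B)) = c * (u t : B) := by
  obtain ⟨ι, s, w, v, hw0, hw1, hv, hrep⟩ := hT
  refine ⟨∑ i ∈ s, w i • (v i * b * ((u t : B) * star (v i) * star (u t : B))), ?_, ?_⟩
  · refine sum_mem fun i hi => ?_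
    rw [← algebraMap_smul ℂ (w i)]
    refine SMulMemClass.smul_mem _ (mul_mem (mul_mem (hv i hi).2 hb) ?_)
    have := (hαu t (star ⟨v i, (hv i hi).2⟩)).symm
    rw [show ((star (⟨v i, (hv i hi).2⟩ : ↥A) : ↥A) : B) = star (v i) from rfl] at this
    rw [this]
    exact (α t (star ⟨v i, (hv i hi).2⟩)).2
  · rw [hrep, Finset.sum_mul]
    refine Finset.sum_congr rfl fun i hi => ?_
    rw [smul_mul_assoc, key_conj u t (v i) b]

include hαu in
lemma exists_small_avg [Nontrivial B] (t : Γ) {b : B} (hb : b ∈ A)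
    (h0 : (0 : B) ∈ relC A (⇑(α t)) b) {δ : ℝ} (hδ : 0 < δ) :
    ∃ T, IsAvg A T ∧ ‖T (b * (u t : B))‖ < δ := by
  rw [relC, Metric.mem_closure_iff] at h0
  obtain ⟨z, hz, hdz⟩ := h0 δ hδ
  rw [convexHull_eq] at hz
  obtain ⟨ι, s, w, p, hw0, hw1, hp, hcm⟩ := hz
  classical
  let V : ι → ↥A := fun i => if h : i ∈ s then (hp i h).choose else 1
  have hV : ∀ i ∈ s, V i ∈ unitary ↥A ∧
      p i = (V i : B) * b * star ((α t (V i) : ↥A) : B) := by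
    intro i hi
    simp only [V, dif_pos hi]
    exact (hp i hi).choose_spec
  refine ⟨fun x => ∑ i ∈ s, w i • ((V i : B) * x * star ((V i : B))),
    ⟨ι, s, w, fun i => (V i : B), hw0, hw1,
      fun i hi => ⟨coe_mem_unitary (hV i hi).1, (V i).2⟩, fun x => rfl⟩, ?_⟩
  have heq : ∑ i ∈ s, w i • ((V i : B) * (b * (u t : B)) * star ((V i : B)))
      = z * (u t : B) := by
    rw [← hcm, Finset.centerMass_eq_of_sum_1 _ _ hw1, Finset.sum_mul]
    refine Finset.sum_congr rfl fun i hi => ?_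
    rw [smul_mul_assoc, key_conj u t (V i : B) b, (hV i hi).2]
    congr 2
    have h1 := hαu t (star (V i))
    rw [show ((star (V i) : ↥A) : B) = star ((V i : ↥A) : B) from rfl] at h1
    rw [← h1, map_star]
    rfl
  show ‖∑ i ∈ s, w i • ((V i : B) * (b * (u t : B)) * star ((V i : B)))‖ < δ
  rw [heq, CStarRing.norm_mul_mem_unitary z (u t).2]
  simpa [dist_eq_norm] using hdz

end Gamma

end Aux

/-- Lemma 3.1 (iii): in the abstract reduced crossed product setup for an action
`α : Γ → Aut(A)` with (SAveP), with ambient C*-algebra `B`, implementing unitaries `u_t`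
and canonical conditional expectation `E`, for every `x ∈ B` we have
`dist(A, C_A(x)) = 0`. -/
theorem dist_subalgebra_dixmierSet_zero
    {B : Type*} [NormedRing B] [StarRing B] [CStarRing B] [NormedAlgebra ℂ B]
    [CompleteSpace B] [StarModule ℂ B]
    {Γ : Type*} [Group Γ]
    (A : StarSubalgebra ℂ B) (hA : IsClosed (A : Set B))
    (u : Γ →* unitary B)
    (α : Γ → (↥A ≃⋆ₐ[ℂ] ↥A))
    (hαu : ∀ (t : Γ) (a : ↥A), ((α t a : ↥A) : B) = (u t : B) * (a : B) * star (u t : B))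
    (hdense : Dense (↑(Submodule.span ℂ
      {x : B | ∃ a ∈ A, ∃ t : Γ, x = a * (u t : B)}) : Set B))
    (E : B →L[ℂ] B) (hEmem : ∀ x : B, E x ∈ A) (hEnorm : ‖E‖ ≤ 1)
    (hEe : ∀ a ∈ A, E (a * (u 1 : B)) = a)
    (hEt : ∀ a ∈ A, ∀ t : Γ, t ≠ 1 → E (a * (u t : B)) = 0)
    (hSAveP : ∀ t : Γ, t ≠ 1 → ∀ b ∈ A, (0 : B) ∈ relC A (⇑(α t)) b) :
    ∀ x : B, ∀ ε : ℝ, 0 < ε → ∃ a ∈ A, ∃ y ∈ relC A id x, ‖a - y‖ < ε := by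
  intro x ε hε
  rcases subsingleton_or_nontrivial B with hB | hB
  · refine ⟨0, zero_mem _, x,
      subset_closure (subset_convexHull _ _ ⟨1, one_mem _, Subsingleton.elim _ _⟩), ?_⟩
    rw [Subsingleton.elim ((0 : B) - x) 0, norm_zero]
    exact hε
  · have key : ∀ x' ∈ Submodule.span ℂ {x : B | ∃ a ∈ A, ∃ t : Γ, x = a * (u t : B)},
        ∀ S : B → B, IsAvg A S → ∀ δ : ℝ, 0 < δ →
        ∃ T a, IsAvg A T ∧ a ∈ A ∧ ‖T (S x') - a‖ < δ := by
      intro x' hx'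
      induction hx' using Submodule.span_induction with
      | mem y hy =>
        obtain ⟨a₀, ha₀, t, rfl⟩ := hy
        intro S hS δ hδ
        obtain ⟨c, hcA, hc⟩ := hS.coeff u α hαu t ha₀
        by_cases ht : t = 1
        · subst ht
          refine ⟨id, c, isAvg_id, hcA, ?_⟩
          have : ((u 1 : unitary B) : B) = 1 := by rw [map_one]; rfl
          show ‖id (S (a₀ * ((u 1 : unitary B) : B))) - c‖ < δ
          rw [id_eq, hc, this, mul_one, sub_self, norm_zero]
          exact hδ
        · obtain ⟨T, hT, hTs⟩ := exists_small_avg u α hαu t hcA (hSAveP t ht c hcA) hδ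
          refine ⟨T, 0, hT, zero_mem _, ?_⟩
          rw [hc]
          simpa using hTs
      | zero =>
        intro S hS δ hδ
        exact ⟨id, 0, isAvg_id, zero_mem _, by simp [hS.map_zero, hδ]⟩
      | add y z hy hz ihy ihz =>
        intro S hS δ hδ
        obtain ⟨T₁, a₁, hT₁, ha₁, h₁⟩ := ihy S hS (δ / 2) (by linarith)
        obtain ⟨T₂, a₂, hT₂, ha₂, h₂⟩ := ihz (T₁ ∘ S) (hT₁.comp hS) (δ / 2) (by linarith)
        refine ⟨T₂ ∘ T₁, T₂ a₁ + a₂, hT₂.comp hT₁, add_mem (hT₂.mapsA ha₁) ha₂, ?_⟩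
        have hsplit : (T₂ ∘ T₁) (S (y + z)) = T₂ (T₁ (S y)) + T₂ (T₁ (S z)) := by
          rw [Function.comp_apply, hS.map_add, hT₁.map_add, hT₂.map_add]
        rw [hsplit, add_sub_add_comm]
        calc ‖T₂ (T₁ (S y)) - T₂ a₁ + (T₂ (T₁ (S z)) - a₂)‖
            ≤ ‖T₂ (T₁ (S y)) - T₂ a₁‖ + ‖T₂ (T₁ (S z)) - a₂‖ := norm_add_le _ _
          _ < δ / 2 + δ / 2 := by
              refine add_lt_add_of_le_of_lt (le_trans (hT₂.lipschitz _ _) h₁.le) h₂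
          _ = δ := by ring
      | smul c y hy ihy =>
        intro S hS δ hδ
        obtain ⟨T, a, hT, ha, h⟩ := ihy S hS (δ / (‖c‖ + 1)) (by positivity)
        refine ⟨T, c • a, hT, SMulMemClass.smul_mem c ha, ?_⟩
        have hTc : T (S (c • y)) = c • T (S y) := by rw [hS.map_smul, hT.map_smul]
        rw [hTc, ← smul_sub, norm_smul]
        have hc1 : (0 : ℝ) < ‖c‖ + 1 := by positivity
        calc ‖c‖ * ‖T (S y) - a‖ ≤ ‖c‖ * (δ / (‖c‖ + 1)) :=
              mul_le_mul_of_nonneg_left h.le (norm_nonneg c)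
          _ < (‖c‖ + 1) * (δ / (‖c‖ + 1)) := by
              exact mul_lt_mul_of_pos_right (lt_add_one _) (by positivity)
          _ = δ := by field_simp
    obtain ⟨x', hx', hxx'⟩ : ∃ x' ∈ Submodule.span ℂ
        {x : B | ∃ a ∈ A, ∃ t : Γ, x = a * (u t : B)}, dist x x' < ε / 2 := by
      have hx := hdense x
      rw [Metric.mem_closure_iff] at hx
      obtain ⟨x', hx', hd⟩ := hx (ε / 2) (by linarith)
      exact ⟨x', hx', hd⟩
    obtain ⟨T, a, hT, haA, hnear⟩ := key x' hx' id isAvg_id (ε / 2) (by linarith)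
    refine ⟨a, haA, T x, subset_closure (by simpa using hT.mem_convexHull x), ?_⟩
    calc ‖a - T x‖ ≤ ‖a - T x'‖ + ‖T x' - T x‖ := norm_sub_le_norm_sub_add_norm_sub _ _ _
      _ < ε / 2 + ε / 2 := by
          refine add_lt_add_of_lt_of_le ?_ (le_trans (hT.lipschitz x' x) ?_)
          · rw [norm_sub_rev]; simpa using hnear
          · rw [← dist_eq_norm, dist_comm]
            exact hxx'.le
      _ = ε := by ring
end

section
/- Assume the abstract reduced crossed product setup for an action α : Γ → Aut(A) with (SAveP), with ambient C*-algebra B, unitaries (u_t), and conditional expectation E : B → A. Let τ be an α-invariant tracial state on A, i.e., a linear functional τ : A → ℂ with τ(1) = 1, τ(a* a) ≥ 0, τ(a b) = τ(b a), and τ ∘ α_t = τ for all t ∈ Γ. If ρ : B → ℂ is a continuous linear functional with ρ(a) = τ(a) for all a ∈ A and ρ(u x u*) = ρ(x) for all x ∈ B and all unitaries u ∈ A, then ρ = τ ∘ E. In particular, τ ∘ E is the unique such extension of τ, and any continuous tracial state on B extending τ equals τ ∘ E. -/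
open scoped ComplexOrder

/-- Corollary 3.2: in the abstract reduced crossed product setup for an action
`α : Γ → Aut(A)` with (SAveP), if `τ` is an `α`-invariant tracial state on `A`, then any
continuous linear functional `ρ` on `B` that extends `τ` and is invariant under
conjugation by unitaries of `A` equals `τ ∘ E`; in particular any continuous tracial
state on `B` extending `τ` equals `τ ∘ E`. -/
theorem invariant_trace_unique_extension
    {B : Type*} [NormedRing B] [StarRing B] [CStarRing B] [NormedAlgebra ℂ B]
    [CompleteSpace B] [StarModule ℂ B]
    {Γ : Type*} [Group Γ]
    (A : StarSubalgebra ℂ B) (hA : IsClosed (A : Set B))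
    (u : Γ →* unitary B)
    (α : Γ → (↥A ≃⋆ₐ[ℂ] ↥A))
    (hαu : ∀ (t : Γ) (a : ↥A), ((α t a : ↥A) : B) = (u t : B) * (a : B) * star (u t : B))
    (hdense : Dense (↑(Submodule.span ℂ
      {x : B | ∃ a ∈ A, ∃ t : Γ, x = a * (u t : B)}) : Set B))
    (E : B →L[ℂ] B) (hEmem : ∀ x : B, E x ∈ A) (hEnorm : ‖E‖ ≤ 1)
    (hEe : ∀ a ∈ A, E (a * (u 1 : B)) = a)
    (hEt : ∀ a ∈ A, ∀ t : Γ, t ≠ 1 → E (a * (u t : B)) = 0)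
    (hSAveP : ∀ t : Γ, t ≠ 1 → ∀ b ∈ A, (0 : B) ∈ relC A (⇑(α t)) b)
    (τ : ↥A →ₗ[ℂ] ℂ) (hτ1 : τ 1 = 1)
    (hτpos : ∀ a : ↥A, 0 ≤ τ (star a * a))
    (hτtr : ∀ a b : ↥A, τ (a * b) = τ (b * a))
    (hτinv : ∀ (t : Γ) (a : ↥A), τ (α t a) = τ a) :
    (∀ ρ : B →L[ℂ] ℂ, (∀ a : ↥A, ρ (a : B) = τ a) →
      (∀ v : ↥A, v ∈ unitary ↥A → ∀ x : B, ρ ((v : B) * x * star (v : B)) = ρ x) →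
      ∀ x : B, ρ x = τ ⟨E x, hEmem x⟩) ∧
    (∀ σ : B →L[ℂ] ℂ, (∀ a : ↥A, σ (a : B) = τ a) →
      (∀ x : B, 0 ≤ σ (star x * x)) → (∀ x y : B, σ (x * y) = σ (y * x)) →
      ∀ x : B, σ x = τ ⟨E x, hEmem x⟩) := by
  have main : ∀ ρ : B →L[ℂ] ℂ, (∀ a : ↥A, ρ (a : B) = τ a) →
      (∀ v : ↥A, v ∈ unitary ↥A → ∀ x : B, ρ ((v : B) * x * star (v : B)) = ρ x) →
      ∀ x : B, ρ x = τ ⟨E x, hEmem x⟩ := by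
    intro ρ hρA hρinv x
    have key : ρ = ρ.comp E := by
      apply ContinuousLinearMap.ext_on hdense
      rintro y ⟨a, ha, t, rfl⟩
      simp only [ContinuousLinearMap.comp_apply]
      by_cases ht : t = 1
      · subst ht
        rw [hEe a ha]
        have h1 : (u 1 : B) = 1 := by rw [map_one]; rfl
        rw [h1, mul_one]
      · rw [hEt a ha t ht, map_zero]
        -- show ρ (a * u t) = 0 using (SAveP)
        set w : B := (u t : B) with hwdef
        have hw : star w * w = 1 := ((Unitary.mem_iff).mp (u t).2).1
        set g : B →L[ℂ] ℂ := ρ.comp ((ContinuousLinearMap.mul ℂ B).flip w) with hg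
        have hgapply : ∀ z : B, g z = ρ (z * w) := fun z => rfl
        set c : ℂ := ρ (a * w) with hc
        set T : Set B := {z : B | g z = c} with hT
        have hsub : {y : B | ∃ v : ↥A, v ∈ unitary ↥A ∧
            y = (v : B) * a * star (((α t) v : ↥A) : B)} ⊆ T := by
          rintro y ⟨v, hv, rfl⟩
          have hstar : star (((α t) v : ↥A) : B) = w * star (v : B) * star w := by
            rw [hαu t v]
            simp only [star_mul, star_star, mul_assoc]
            rfl
          show g _ = c
          rw [hgapply, hstar]
          have : (v : B) * a * (w * star (v : B) * star w) * w
              = (v : B) * (a * w) * star (v : B) := by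
            simp only [mul_assoc, hw, mul_one]
          rw [this, hρinv v hv (a * w)]
        have hTconv : Convex ℝ T := by
          intro z1 hz1 z2 hz2 p q hp hq hpq
          simp only [hT, Set.mem_setOf_eq] at hz1 hz2 ⊢
          rw [map_add, g.map_smul_of_tower, g.map_smul_of_tower, hz1, hz2,
            ← add_smul, hpq, one_smul]
        have hTclosed : IsClosed T := isClosed_eq g.continuous continuous_const
        have hrel : relC A (⇑(α t)) a ⊆ T :=
          closure_minimal (convexHull_min hsub hTconv) hTclosed
        have h0 : (0 : B) ∈ T := hrel (hSAveP t ht a ha)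
        have : g 0 = c := h0
        rw [map_zero] at this
        exact this.symm
    have hEx : ρ (E x) = τ ⟨E x, hEmem x⟩ := hρA ⟨E x, hEmem x⟩
    calc ρ x = ρ (E x) := DFunLike.congr_fun key x
      _ = τ ⟨E x, hEmem x⟩ := hEx
  refine ⟨main, ?_⟩
  intro σ hσA hσpos hσtr x
  apply main σ hσA
  intro v hv y
  have hv1 : star (v : B) * (v : B) = 1 := by
    simpa using congrArg (Subtype.val) ((Unitary.mem_iff).mp hv).1
  calc σ ((v : B) * y * star (v : B)) = σ (star (v : B) * ((v : B) * y)) := hσtr _ _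
    _ = σ y := by rw [← mul_assoc, hv1, one_mul]
end
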